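/- Response model error, farsighted-form bound. Fix a leader policy π with quantal response ν^π, and suppose B_A > 0 satisfies ‖A_h^π‖_∞ ≤ B_A and ‖Ã_h‖_∞ ≤ B_A for all h = 1,…,H. With Δ̃_h⁽¹⁾(s,b) = (E_{s,b} − E_s)[ Σ_{l=h}^H γ^{l−h}·(Q̃_l − r_l^π − γ·P_l^π Ṽ_{l+1})(s_l,b_l) ] and (P_l^π Ṽ_{l+1})(s,b) = Σ_{s'} P_l^π(s'|s,b)·Ṽ_{l+1}(s'), it holds that Σ_{h=1}^H H·E^{π,ν^π}[ ‖(ν̃_h − ν_h^π)(·|s_h)‖₁ ] ≤ C⁽⁰⁾·Σ_{h=1}^H E^{π,ν^π}[ |Δ̃_h⁽¹⁾(s_h,b_h)| ] + C⁽²⁾·max_{h∈[H]} E^{π,ν^π}[ ((Q̃_h − r_h^π − γ·P_h^π Ṽ_{h+1})(s_h,b_h))² ], where C⁽⁰⁾ = 2ηH and C⁽²⁾ = 2·η²·H²·exp(6ηB_A)·(1 + 4·eff_H(γ))·(eff_H(exp(2ηB_A)·γ))². -/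

import Mathlib

open Finset

noncomputable section

namespace QSE

variable {S A B : Type}

/-- Follower reward under the leader policy: `r_h^π(s,b) = Σ_a π_h(a|s,b) r_h(s,a,b)`. -/
def rPol [Fintype A] (pol : ℕ → S → B → A → ℝ) (r : ℕ → S → A → B → ℝ)
    (h : ℕ) (s : S) (b : B) : ℝ :=
  ∑ a, pol h s b a * r h s a b

/-- Transition under the leader policy: `P_h^π(s'|s,b) = Σ_a π_h(a|s,b) P_h(s'|s,a,b)`. -/
def pPol [Fintype A] (pol : ℕ → S → B → A → ℝ) (P : ℕ → S → A → B → S → ℝ)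
    (h : ℕ) (s : S) (b : B) (s' : S) : ℝ :=
  ∑ a, pol h s b a * P h s a b s'

/-- Fuel-indexed soft state value: `vAux n = V_{H−n}^π` (steps are 0-based, `V_H ≡ 0`). -/
def vAux [Fintype S] [Fintype A] [Fintype B] (η γ : ℝ) (H : ℕ)
    (pol : ℕ → S → B → A → ℝ) (r : ℕ → S → A → B → ℝ)
    (P : ℕ → S → A → B → S → ℝ) : ℕ → S → ℝ
  | 0, _ => 0
  | n + 1, s =>
      η⁻¹ * Real.log (∑ b, Real.exp (η * (rPol pol r (H - (n + 1)) s b +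
        γ * ∑ s', pPol pol P (H - (n + 1)) s b s' * vAux η γ H pol r P n s')))

/-- Follower soft state value `V_h^π` (0-based step `h`, so `V_H ≡ 0`). -/
def softV [Fintype S] [Fintype A] [Fintype B] (η γ : ℝ) (H : ℕ)
    (pol : ℕ → S → B → A → ℝ) (r : ℕ → S → A → B → ℝ)
    (P : ℕ → S → A → B → S → ℝ) (h : ℕ) (s : S) : ℝ :=
  vAux η γ H pol r P (H - h) s

/-- Follower soft action value `Q_h^π(s,b) = r_h^π(s,b) + γ Σ_{s'} P_h^π(s'|s,b) V_{h+1}^π(s')`. -/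
def softQ [Fintype S] [Fintype A] [Fintype B] (η γ : ℝ) (H : ℕ)
    (pol : ℕ → S → B → A → ℝ) (r : ℕ → S → A → B → ℝ)
    (P : ℕ → S → A → B → S → ℝ) (h : ℕ) (s : S) (b : B) : ℝ :=
  rPol pol r h s b + γ * ∑ s', pPol pol P h s b s' * softV η γ H pol r P (h + 1) s'

/-- Follower advantage `A_h^π = Q_h^π − V_h^π`. -/
def softA [Fintype S] [Fintype A] [Fintype B] (η γ : ℝ) (H : ℕ)
    (pol : ℕ → S → B → A → ℝ) (r : ℕ → S → A → B → ℝ)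
    (P : ℕ → S → A → B → S → ℝ) (h : ℕ) (s : S) (b : B) : ℝ :=
  softQ η γ H pol r P h s b - softV η γ H pol r P h s

/-- Quantal response `ν_h^π(b|s) = exp(η A_h^π(s,b))`. -/
def qr [Fintype S] [Fintype A] [Fintype B] (η γ : ℝ) (H : ℕ)
    (pol : ℕ → S → B → A → ℝ) (r : ℕ → S → A → B → ℝ)
    (P : ℕ → S → A → B → S → ℝ) (h : ℕ) (s : S) (b : B) : ℝ :=
  Real.exp (η * softA η γ H pol r P h s b)

/-- Marginal law of the state `s_h` along the trajectory generated by `(ρ₀, ν, π, P)`. -/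
def margS [Fintype S] [Fintype A] [Fintype B] (rho0 : S → ℝ)
    (pol : ℕ → S → B → A → ℝ) (nu : ℕ → S → B → ℝ)
    (P : ℕ → S → A → B → S → ℝ) : ℕ → S → ℝ
  | 0, s => rho0 s
  | h + 1, s' => ∑ s, ∑ b, ∑ a,
      margS rho0 pol nu P h s * nu h s b * pol h s b a * P h s a b s'

/-- Integral operator `(T_h^{π,ν} f)(s) = Σ_{a,b} π_h(a|s,b) ν_h(b|s) f(s,a,b)`. -/
def Top [Fintype A] [Fintype B] (pol : ℕ → S → B → A → ℝ) (nu : ℕ → S → B → ℝ)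
    (h : ℕ) (f : S → A → B → ℝ) (s : S) : ℝ :=
  ∑ b, ∑ a, nu h s b * pol h s b a * f s a b

/-- Leader's value `J(π) = E^{π,ν^π}[Σ_{h<H} u_h(s_h,a_h,b_h)]`. -/
def Jval [Fintype S] [Fintype A] [Fintype B] (η γ : ℝ) (H : ℕ) (rho0 : S → ℝ)
    (pol : ℕ → S → B → A → ℝ) (r : ℕ → S → A → B → ℝ)
    (P : ℕ → S → A → B → S → ℝ) (u : ℕ → S → A → B → ℝ) : ℝ :=
  ∑ h ∈ Finset.range H, ∑ s, ∑ b, ∑ a,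
    margS rho0 pol (qr η γ H pol r P) P h s * qr η γ H pol r P h s b *
      pol h s b a * u h s a b

/-- Fuel-indexed conditional discounted cumulative value:
`cumAux n s b = E[Σ_{l=H−n}^{H−1} γ^{l−(H−n)} X_l(s_l,b_l) | s_{H−n} = s, b_{H−n} = b]`. -/
def cumAux [Fintype S] [Fintype A] [Fintype B] (γ : ℝ) (H : ℕ)
    (pol : ℕ → S → B → A → ℝ) (nu : ℕ → S → B → ℝ)
    (P : ℕ → S → A → B → S → ℝ) (X : ℕ → S → B → ℝ) : ℕ → S → B → ℝ
  | 0, _, _ => 0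
  | n + 1, s, b => X (H - (n + 1)) s b +
      γ * ∑ a, pol (H - (n + 1)) s b a * ∑ s', P (H - (n + 1)) s a b s' *
          ∑ b', nu (H - n) s' b' * cumAux γ H pol nu P X n s' b'

/-- `cumSB h s b = E[Σ_{l=h}^{H−1} γ^{l−h} X_l(s_l,b_l) | s_h = s, b_h = b]`. -/
def cumSB [Fintype S] [Fintype A] [Fintype B] (γ : ℝ) (H : ℕ)
    (pol : ℕ → S → B → A → ℝ) (nu : ℕ → S → B → ℝ)
    (P : ℕ → S → A → B → S → ℝ) (X : ℕ → S → B → ℝ) (h : ℕ) (s : S) (b : B) : ℝ :=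
  cumAux γ H pol nu P X (H - h) s b

/-- Estimated soft state value `Ṽ_h` derived from `Q̃` (with `Ṽ_H ≡ 0`). -/
def vTil [Fintype B] (η : ℝ) (H : ℕ) (Qt : ℕ → S → B → ℝ) (h : ℕ) (s : S) : ℝ :=
  if h < H then η⁻¹ * Real.log (∑ b, Real.exp (η * Qt h s b)) else 0

/-- Estimated advantage `Ã_h = Q̃_h − Ṽ_h`. -/
def aTil [Fintype B] (η : ℝ) (H : ℕ) (Qt : ℕ → S → B → ℝ) (h : ℕ) (s : S) (b : B) : ℝ :=
  Qt h s b - vTil η H Qt h s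

/-- Estimated quantal response `ν̃_h(b|s) = exp(η Ã_h(s,b))`. -/
def nuTil [Fintype B] (η : ℝ) (H : ℕ) (Qt : ℕ → S → B → ℝ) (h : ℕ) (s : S) (b : B) : ℝ :=
  Real.exp (η * aTil η H Qt h s b)

/-- Follower Bellman residual `(Q̃_h − r_h^π − γ P_h^π Ṽ_{h+1})(s,b)`. -/
def bres [Fintype S] [Fintype A] [Fintype B] (η γ : ℝ) (H : ℕ)
    (pol : ℕ → S → B → A → ℝ) (r : ℕ → S → A → B → ℝ)
    (P : ℕ → S → A → B → S → ℝ) (Qt : ℕ → S → B → ℝ) (h : ℕ) (s : S) (b : B) : ℝ :=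
  Qt h s b - rPol pol r h s b - γ * ∑ s', pPol pol P h s b s' * vTil η H Qt (h + 1) s'

/-- First-order quantal response error
`Δ̃_h⁽¹⁾(s,b) = (E_{s,b} − E_s)[Σ_{l=h}^{H−1} γ^{l−h}(Q̃_l − r_l^π − γ P_l^π Ṽ_{l+1})(s_l,b_l)]`. -/
def del1 [Fintype S] [Fintype A] [Fintype B] (η γ : ℝ) (H : ℕ)
    (pol : ℕ → S → B → A → ℝ) (r : ℕ → S → A → B → ℝ)
    (P : ℕ → S → A → B → S → ℝ) (Qt : ℕ → S → B → ℝ) (h : ℕ) (s : S) (b : B) : ℝ :=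
  cumSB γ H pol (qr η γ H pol r P) P (bres η γ H pol r P Qt) h s b -
    ∑ b', qr η γ H pol r P h s b' *
      cumSB γ H pol (qr η γ H pol r P) P (bres η γ H pol r P Qt) h s b'

/-- Geometric sum `eff_H(x) = Σ_{i<H} x^i`. -/
def effH (H : ℕ) (x : ℝ) : ℝ := ∑ i ∈ Finset.range H, x ^ i

end QSE

open QSE


namespace QSEAux

lemma quad_le_exp {y : ℝ} (hy : 0 ≤ y) : 1 + y + y ^ 2 / 2 ≤ Real.exp y := by
  have h := Real.sum_le_exp_of_nonneg hy 3
  have : ∑ i ∈ Finset.range 3, y ^ i / (Nat.factorial i) = 1 + y + y ^ 2 / 2 := by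
    rw [Finset.sum_range_succ, Finset.sum_range_succ, Finset.sum_range_succ]
    norm_num [Nat.factorial]
  linarith [this ▸ h]

lemma exp_le_quad {x : ℝ} (hx : x ≤ 0) : Real.exp x ≤ 1 + x + x ^ 2 / 2 := by
  have hy : 0 ≤ -x := by linarith
  have h1 : 1 + (-x) + (-x) ^ 2 / 2 ≤ Real.exp (-x) := quad_le_exp hy
  have h2 : Real.exp x * Real.exp (-x) = 1 := by
    rw [← Real.exp_add]; simp
  have h3 : (0:ℝ) < Real.exp x := Real.exp_pos x
  nlinarith [sq_nonneg x, sq_nonneg (x*x), Real.exp_pos (-x)]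

lemma exp_sub_le_half_sq_mul_exp_self {t : ℝ} (ht : 0 ≤ t) :
    Real.exp t - 1 - t ≤ t ^ 2 / 2 * Real.exp t := by
  -- via monotonicity of g(t) = t^2/2 * exp t - exp t + 1 + t on [0, ∞)
  set g : ℝ → ℝ := fun t => t ^ 2 / 2 * Real.exp t - Real.exp t + 1 + t with hg
  have hderiv : ∀ x : ℝ, HasDerivAt g (Real.exp x * (x + x ^ 2 / 2 - 1) + 1) x := by
    intro x
    have h1 : HasDerivAt (fun t : ℝ => t ^ 2 / 2) x x := by
      simpa using (hasDerivAt_pow 2 x).div_const 2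
    have h2 := Real.hasDerivAt_exp x
    have h3 := h1.mul h2
    have h4 := ((h3.sub h2).add_const 1).add (hasDerivAt_id x)
    refine h4.congr_deriv ?_
    ring
  have hd_nonneg : ∀ x : ℝ, 0 ≤ x → 0 ≤ Real.exp x * (x + x ^ 2 / 2 - 1) + 1 := by
    intro x hx
    have h1 : (1 - x) * Real.exp x ≤ 1 := by
      have := Real.add_one_le_exp (-x)
      have h2 : (0:ℝ) < Real.exp x := Real.exp_pos x
      have h3 : Real.exp (-x) * Real.exp x = 1 := by rw [← Real.exp_add]; simp
      nlinarith
    nlinarith [Real.exp_pos x, sq_nonneg x, mul_nonneg (Real.exp_pos x).le (mul_nonneg (mul_nonneg hx hx) (by norm_num : (0:ℝ) ≤ 1/2))]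
  have hmono : MonotoneOn g (Set.Ici (0:ℝ)) := by
    apply monotoneOn_of_deriv_nonneg (convex_Ici 0)
    · apply Continuous.continuousOn
      have : Continuous g := by
        simp only [hg]; continuity
      exact this
    · exact fun x hx => (hderiv x).differentiableAt.differentiableWithinAt
    · intro x hx
      rw [(hderiv x).deriv]
      exact hd_nonneg x (le_of_lt (by simpa using hx))
  have h0 : g 0 ≤ g t := hmono (Set.mem_Ici.mpr le_rfl) (Set.mem_Ici.mpr ht) ht
  have : g 0 = 0 := by simp [hg]
  simp only [hg] at h0 this
  linarith

lemma exp_taylor_bound {t c : ℝ} (htc : t ≤ c) (hc : 0 ≤ c) :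
    Real.exp t - 1 - t ≤ t ^ 2 / 2 * Real.exp c := by
  have hec : (1:ℝ) ≤ Real.exp c := by simpa using Real.exp_le_exp.mpr hc
  rcases le_or_gt t 0 with h | h
  · have := exp_le_quad h
    nlinarith [sq_nonneg t]
  · have h1 := exp_sub_le_half_sq_mul_exp_self h.le
    have h2 : Real.exp t ≤ Real.exp c := Real.exp_le_exp.mpr htc
    nlinarith [sq_nonneg t]

lemma two_mul_le_t {a b t : ℝ} (ht : 0 < t) : 2 * a * b ≤ t * a ^ 2 + t⁻¹ * b ^ 2 := by
  have hkey : (t*a-b)^2 / t = t*a^2 - 2*a*b + b^2/t := by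
    field_simp; ring
  have h1 : 0 ≤ (t*a-b)^2 / t := div_nonneg (sq_nonneg _) ht.le
  rw [hkey] at h1
  have h2 : t⁻¹ * b ^ 2 = b^2/t := by rw [inv_mul_eq_div]
  linarith

end QSEAux
namespace QSEAux

open QSE

section Struct

variable {S A B : Type} [Fintype S] [Fintype A] [Fintype B]
variable [Nonempty S] [Nonempty A] [Nonempty B]
variable (η γ : ℝ) (H : ℕ) (pol : ℕ → S → B → A → ℝ) (r : ℕ → S → A → B → ℝ)
variable (P : ℕ → S → A → B → S → ℝ) (Qt : ℕ → S → B → ℝ)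

lemma cumSB_top (γ' : ℝ) (nu : ℕ → S → B → ℝ) (X : ℕ → S → B → ℝ) (s : S) (b : B) :
    cumSB γ' H pol nu P X H s b = 0 := by
  simp only [cumSB, Nat.sub_self]
  rfl

lemma cumSB_succ (γ' : ℝ) (nu : ℕ → S → B → ℝ) (X : ℕ → S → B → ℝ) {h : ℕ} (hh : h < H)
    (s : S) (b : B) :
    cumSB γ' H pol nu P X h s b = X h s b + γ' * ∑ a, pol h s b a *
      ∑ s', P h s a b s' * ∑ b', nu (h+1) s' b' * cumSB γ' H pol nu P X (h+1) s' b' := by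
  have e1 : H - h = (H - (h+1)) + 1 := by omega
  have e2 : H - ((H - (h+1)) + 1) = h := by omega
  have e3 : H - (H - (h+1)) = h + 1 := by omega
  simp only [cumSB]
  rw [e1, cumAux, e2, e3]

lemma softV_eq {h : ℕ} (hh : h < H) (s : S) :
    softV η γ H pol r P h s
      = η⁻¹ * Real.log (∑ b, Real.exp (η * softQ η γ H pol r P h s b)) := by
  have e1 : H - h = (H - (h+1)) + 1 := by omega
  have e2 : H - ((H - (h+1)) + 1) = h := by omega
  simp only [softV]
  rw [e1, vAux, e2]
  simp only [softQ, softV]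

lemma softV_top (s : S) : softV η γ H pol r P H s = 0 := by
  simp only [softV, Nat.sub_self]
  rfl

lemma vTil_top (s : S) : vTil η H Qt H s = 0 := by
  simp [vTil]

lemma sum_qr_one (hη : 0 < η) {h : ℕ} (hh : h < H) (s : S) :
    ∑ b, qr η γ H pol r P h s b = 1 := by
  have hpos : 0 < ∑ b, Real.exp (η * softQ η γ H pol r P h s b) :=
    Finset.sum_pos (fun _ _ => Real.exp_pos _) Finset.univ_nonempty
  simp only [qr, softA, mul_sub, Real.exp_sub]
  rw [← Finset.sum_div, softV_eq η γ H pol r P hh, ← mul_assoc,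
    mul_inv_cancel₀ hη.ne', one_mul, Real.exp_log hpos, div_self hpos.ne']

lemma sum_nuTil_one (hη : 0 < η) {h : ℕ} (hh : h < H) (s : S) :
    ∑ b, nuTil η H Qt h s b = 1 := by
  have hpos : 0 < ∑ b, Real.exp (η * Qt h s b) :=
    Finset.sum_pos (fun _ _ => Real.exp_pos _) Finset.univ_nonempty
  simp only [nuTil, aTil, mul_sub, Real.exp_sub]
  rw [← Finset.sum_div, vTil, if_pos hh, ← mul_assoc,
    mul_inv_cancel₀ hη.ne', one_mul, Real.exp_log hpos, div_self hpos.ne']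

lemma nuTil_eq (h : ℕ) (s : S) (b : B) :
    nuTil η H Qt h s b = qr η γ H pol r P h s b *
      Real.exp (η * (aTil η H Qt h s b - softA η γ H pol r P h s b)) := by
  rw [nuTil, qr, ← Real.exp_add]
  ring_nf

end Struct

end QSEAux
namespace QSEAux

open QSE

set_option linter.unusedSectionVars false

section Struct2

variable {S A B : Type} [Fintype S] [Fintype A] [Fintype B]
variable [Nonempty S] [Nonempty A] [Nonempty B]
variable (η γ : ℝ) (H : ℕ) (pol : ℕ → S → B → A → ℝ) (r : ℕ → S → A → B → ℝ)
variable (P : ℕ → S → A → B → S → ℝ) (Qt : ℕ → S → B → ℝ)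

/-- `Ṽ_h − V_h`. -/
def Zt (h : ℕ) (s : S) : ℝ := vTil η H Qt h s - softV η γ H pol r P h s

/-- `Ã_h − A_h`. -/
def Dv (h : ℕ) (s : S) (b : B) : ℝ := aTil η H Qt h s b - softA η γ H pol r P h s b

/-- `G_h(s,b)`, conditional discounted future residual. -/
def Gf (h : ℕ) (s : S) (b : B) : ℝ :=
  cumSB γ H pol (qr η γ H pol r P) P (bres η γ H pol r P Qt) h s b

/-- `F_h(s) = E_ν G_h`. -/
def Ff (h : ℕ) (s : S) : ℝ := ∑ b, qr η γ H pol r P h s b * Gf η γ H pol r P Qt h s b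

/-- `W_h = Ṽ_h − V_h − F_h`. -/
def Wf (h : ℕ) (s : S) : ℝ := Zt η γ H pol r P Qt h s - Ff η γ H pol r P Qt h s

/-- `U_h`, discounted (at inflated rate) future absolute residual. -/
def Uf (BA : ℝ) (h : ℕ) (s : S) (b : B) : ℝ :=
  cumSB (Real.exp (2*η*BA) * γ) H pol (qr η γ H pol r P) P
    (fun l s b => |bres η γ H pol r P Qt l s b|) h s b

lemma polP_swap (h : ℕ) (s : S) (b : B) (f : S → ℝ) :
    ∑ a, pol h s b a * ∑ s', P h s a b s' * f s'
      = ∑ s', pPol pol P h s b s' * f s' := by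
  simp only [pPol, Finset.mul_sum, Finset.sum_mul]
  rw [Finset.sum_comm]
  exact Finset.sum_congr rfl fun s' _ => Finset.sum_congr rfl fun a _ => by ring

lemma EE_eq (h : ℕ) (s : S) (b : B) :
    Qt h s b - softQ η γ H pol r P h s b
      = bres η γ H pol r P Qt h s b
        + γ * ∑ s', pPol pol P h s b s' * Zt η γ H pol r P Qt (h+1) s' := by
  simp only [bres, softQ, Zt, mul_sub, Finset.sum_sub_distrib]
  ring

lemma Dv_eq (h : ℕ) (s : S) (b : B) :
    Dv η γ H pol r P Qt h s b
      = (Qt h s b - softQ η γ H pol r P h s b) - Zt η γ H pol r P Qt h s := by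
  simp only [Dv, Zt, aTil, softA]
  ring

lemma qr_pos (h : ℕ) (s : S) (b : B) : 0 < qr η γ H pol r P h s b := Real.exp_pos _

lemma absDv_le (BA : ℝ)
    (hA : ∀ h < H, ∀ s b, |softA η γ H pol r P h s b| ≤ BA)
    (hAt : ∀ h < H, ∀ s b, |aTil η H Qt h s b| ≤ BA)
    {h : ℕ} (hh : h < H) (s : S) (b : B) :
    |Dv η γ H pol r P Qt h s b| ≤ 2 * BA := by
  have h1 := hA h hh s b
  have h2 := hAt h hh s b
  rw [Dv]
  calc |aTil η H Qt h s b - softA η γ H pol r P h s b|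
      ≤ |aTil η H Qt h s b| + |softA η γ H pol r P h s b| := abs_sub _ _
    _ ≤ 2 * BA := by linarith

lemma onestep (hη : 0 < η) {h : ℕ} (hh : h < H) (s : S) :
    ∑ b, |nuTil η H Qt h s b - qr η γ H pol r P h s b| ≤
      2 * η * ∑ b, qr η γ H pol r P h s b * |Dv η γ H pol r P Qt h s b| := by
  have hsum : ∑ b, (nuTil η H Qt h s b - qr η γ H pol r P h s b) = 0 := by
    rw [Finset.sum_sub_distrib, sum_nuTil_one η H Qt hη hh,
      sum_qr_one η γ H pol r P hη hh]
    ring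
  have key : ∀ b : B, |nuTil η H Qt h s b - qr η γ H pol r P h s b|
      = (nuTil η H Qt h s b - qr η γ H pol r P h s b)
        + 2 * max (qr η γ H pol r P h s b - nuTil η H Qt h s b) 0 := by
    intro b
    rcases le_total (qr η γ H pol r P h s b) (nuTil η H Qt h s b) with hle | hle
    · rw [abs_of_nonneg (by linarith), max_eq_right (by linarith)]
      ring
    · rw [abs_of_nonpos (by linarith), max_eq_left (by linarith)]
      ring
  have hterm : ∀ b : B, max (qr η γ H pol r P h s b - nuTil η H Qt h s b) 0
      ≤ qr η γ H pol r P h s b * (η * |Dv η γ H pol r P Qt h s b|) := by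
    intro b
    have hq := (qr_pos η γ H pol r P h s b).le
    have habs : 0 ≤ qr η γ H pol r P h s b * (η * |Dv η γ H pol r P Qt h s b|) := by
      positivity
    apply max_le _ habs
    rw [nuTil_eq η γ H pol r P Qt h s b]
    have hexp : 1 - Real.exp (η * (aTil η H Qt h s b - softA η γ H pol r P h s b))
        ≤ η * |Dv η γ H pol r P Qt h s b| := by
      have h1 := Real.add_one_le_exp (η * (aTil η H Qt h s b - softA η γ H pol r P h s b))
      have h2 : η * (aTil η H Qt h s b - softA η γ H pol r P h s b)
          = η * Dv η γ H pol r P Qt h s b := by rw [Dv]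
      have h3 : |η * Dv η γ H pol r P Qt h s b| = η * |Dv η γ H pol r P Qt h s b| := by
        rw [abs_mul, abs_of_pos hη]
      nlinarith [neg_abs_le (η * Dv η γ H pol r P Qt h s b)]
    calc qr η γ H pol r P h s b
          - qr η γ H pol r P h s b *
            Real.exp (η * (aTil η H Qt h s b - softA η γ H pol r P h s b))
        = qr η γ H pol r P h s b *
            (1 - Real.exp (η * (aTil η H Qt h s b - softA η γ H pol r P h s b))) := by ring
      _ ≤ qr η γ H pol r P h s b * (η * |Dv η γ H pol r P Qt h s b|) :=
          mul_le_mul_of_nonneg_left hexp hq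
  calc ∑ b, |nuTil η H Qt h s b - qr η γ H pol r P h s b|
      = ∑ b, ((nuTil η H Qt h s b - qr η γ H pol r P h s b)
          + 2 * max (qr η γ H pol r P h s b - nuTil η H Qt h s b) 0) :=
        Finset.sum_congr rfl fun b _ => key b
    _ = 2 * ∑ b, max (qr η γ H pol r P h s b - nuTil η H Qt h s b) 0 := by
        rw [Finset.sum_add_distrib, hsum, ← Finset.mul_sum]
        ring
    _ ≤ 2 * ∑ b, qr η γ H pol r P h s b * (η * |Dv η γ H pol r P Qt h s b|) := by
        apply mul_le_mul_of_nonneg_left (Finset.sum_le_sum fun b _ => hterm b) (by norm_num)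
    _ = 2 * η * ∑ b, qr η γ H pol r P h s b * |Dv η γ H pol r P Qt h s b| := by
        rw [Finset.mul_sum, Finset.mul_sum]
        exact Finset.sum_congr rfl fun b _ => by ring

end Struct2

end QSEAux
namespace QSEAux

open QSE

set_option linter.unusedSectionVars false
set_option maxHeartbeats 1000000

section Struct3

variable {S A B : Type} [Fintype S] [Fintype A] [Fintype B]
variable [Nonempty S] [Nonempty A] [Nonempty B]
variable (η γ : ℝ) (H : ℕ) (pol : ℕ → S → B → A → ℝ) (r : ℕ → S → A → B → ℝ)
variable (P : ℕ → S → A → B → S → ℝ) (Qt : ℕ → S → B → ℝ)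

lemma sum_qr_expD_one (hη : 0 < η) {h : ℕ} (hh : h < H) (s : S) :
    ∑ b, qr η γ H pol r P h s b * Real.exp (η * Dv η γ H pol r P Qt h s b) = 1 := by
  have : ∀ b : B, qr η γ H pol r P h s b * Real.exp (η * Dv η γ H pol r P Qt h s b)
      = nuTil η H Qt h s b := fun b => (nuTil_eq η γ H pol r P Qt h s b).symm
  rw [Finset.sum_congr rfl fun b _ => this b]
  exact sum_nuTil_one η H Qt hη hh s

lemma sum_qr_Dv_nonpos (hη : 0 < η) {h : ℕ} (hh : h < H) (s : S) :
    ∑ b, qr η γ H pol r P h s b * Dv η γ H pol r P Qt h s b ≤ 0 := by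
  have h1 : ∑ b, qr η γ H pol r P h s b * (1 + η * Dv η γ H pol r P Qt h s b)
      ≤ ∑ b, qr η γ H pol r P h s b * Real.exp (η * Dv η γ H pol r P Qt h s b) := by
    apply Finset.sum_le_sum
    intro b _
    apply mul_le_mul_of_nonneg_left _ (qr_pos η γ H pol r P h s b).le
    linarith [Real.add_one_le_exp (η * Dv η γ H pol r P Qt h s b)]
  rw [sum_qr_expD_one η γ H pol r P Qt hη hh] at h1
  have h2 : ∑ b, qr η γ H pol r P h s b * (1 + η * Dv η γ H pol r P Qt h s b)
      = 1 + η * ∑ b, qr η γ H pol r P h s b * Dv η γ H pol r P Qt h s b := by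
    simp only [mul_add, mul_one, Finset.sum_add_distrib, sum_qr_one η γ H pol r P hη hh,
      Finset.mul_sum]
    congr 1
    exact Finset.sum_congr rfl fun b _ => by ring
  rw [h2] at h1
  nlinarith

lemma sum_nuTil_Dv_nonneg (hη : 0 < η) {h : ℕ} (hh : h < H) (s : S) :
    0 ≤ ∑ b, nuTil η H Qt h s b * Dv η γ H pol r P Qt h s b := by
  have h1 : ∑ b, nuTil η H Qt h s b * (1 - η * Dv η γ H pol r P Qt h s b)
      ≤ ∑ b, qr η γ H pol r P h s b := by
    apply Finset.sum_le_sum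
    intro b _
    rw [nuTil_eq η γ H pol r P Qt h s b]
    have hq := (qr_pos η γ H pol r P h s b).le
    have he : 1 - η * Dv η γ H pol r P Qt h s b
        ≤ Real.exp (-(η * Dv η γ H pol r P Qt h s b)) := by
      linarith [Real.add_one_le_exp (-(η * Dv η γ H pol r P Qt h s b))]
    have hD : η * (aTil η H Qt h s b - softA η γ H pol r P h s b)
        = η * Dv η γ H pol r P Qt h s b := by rw [Dv]
    rw [hD]
    calc qr η γ H pol r P h s b * Real.exp (η * Dv η γ H pol r P Qt h s b) *
          (1 - η * Dv η γ H pol r P Qt h s b)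
        ≤ qr η γ H pol r P h s b * Real.exp (η * Dv η γ H pol r P Qt h s b) *
          Real.exp (-(η * Dv η γ H pol r P Qt h s b)) := by
          apply mul_le_mul_of_nonneg_left he
          positivity
      _ = qr η γ H pol r P h s b := by
          rw [mul_assoc, ← Real.exp_add]
          simp
  rw [sum_qr_one η γ H pol r P hη hh] at h1
  have h2 : ∑ b, nuTil η H Qt h s b * (1 - η * Dv η γ H pol r P Qt h s b)
      = 1 - η * ∑ b, nuTil η H Qt h s b * Dv η γ H pol r P Qt h s b := by
    simp only [mul_sub, mul_one, Finset.sum_sub_distrib, sum_nuTil_one η H Qt hη hh,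
      Finset.mul_sum]
    congr 1
    exact Finset.sum_congr rfl fun b _ => by ring
  rw [h2] at h1
  nlinarith

lemma beta_le (hη : 0 < η) (BA : ℝ) (hBA : 0 < BA)
    (hA : ∀ h < H, ∀ s b, |softA η γ H pol r P h s b| ≤ BA)
    (hAt : ∀ h < H, ∀ s b, |aTil η H Qt h s b| ≤ BA)
    {h : ℕ} (hh : h < H) (s : S) :
    -∑ b, qr η γ H pol r P h s b * Dv η γ H pol r P Qt h s b
      ≤ η / 2 * Real.exp (2*η*BA) * ∑ b, qr η γ H pol r P h s b *
          (Dv η γ H pol r P Qt h s b) ^ 2 := by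
  have hc : (0:ℝ) ≤ 2*η*BA := by positivity
  have h1 : ∑ b, qr η γ H pol r P h s b *
      (Real.exp (η * Dv η γ H pol r P Qt h s b) - 1 - η * Dv η γ H pol r P Qt h s b)
      ≤ ∑ b, qr η γ H pol r P h s b *
        ((η * Dv η γ H pol r P Qt h s b) ^ 2 / 2 * Real.exp (2*η*BA)) := by
    apply Finset.sum_le_sum
    intro b _
    apply mul_le_mul_of_nonneg_left _ (qr_pos η γ H pol r P h s b).le
    apply exp_taylor_bound _ hc
    have := absDv_le η γ H pol r P Qt BA hA hAt hh s b
    have hd : Dv η γ H pol r P Qt h s b ≤ 2 * BA := le_trans (le_abs_self _) this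
    nlinarith
  have h2 : ∑ b, qr η γ H pol r P h s b *
      (Real.exp (η * Dv η γ H pol r P Qt h s b) - 1 - η * Dv η γ H pol r P Qt h s b)
      = -η * ∑ b, qr η γ H pol r P h s b * Dv η γ H pol r P Qt h s b := by
    have e1 : ∀ b : B, qr η γ H pol r P h s b *
        (Real.exp (η * Dv η γ H pol r P Qt h s b) - 1 - η * Dv η γ H pol r P Qt h s b)
        = qr η γ H pol r P h s b * Real.exp (η * Dv η γ H pol r P Qt h s b)
          - qr η γ H pol r P h s b
          - η * (qr η γ H pol r P h s b * Dv η γ H pol r P Qt h s b) := fun b => by ring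
    rw [Finset.sum_congr rfl fun b _ => e1 b, Finset.sum_sub_distrib, Finset.sum_sub_distrib,
      sum_qr_expD_one η γ H pol r P Qt hη hh, sum_qr_one η γ H pol r P hη hh s,
      ← Finset.mul_sum]
    ring
  have h3 : ∑ b, qr η γ H pol r P h s b *
      ((η * Dv η γ H pol r P Qt h s b) ^ 2 / 2 * Real.exp (2*η*BA))
      = η^2/2 * Real.exp (2*η*BA) * ∑ b, qr η γ H pol r P h s b *
          (Dv η γ H pol r P Qt h s b) ^ 2 := by
    rw [Finset.mul_sum]
    exact Finset.sum_congr rfl fun b _ => by ring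
  rw [h2, h3] at h1
  nlinarith

lemma pPol_nonneg (hpol0 : ∀ h < H, ∀ s b a, 0 ≤ pol h s b a)
    (hP0 : ∀ h < H, ∀ s a b s', 0 ≤ P h s a b s') {h : ℕ} (hh : h < H) (s : S) (b : B)
    (s' : S) : 0 ≤ pPol pol P h s b s' :=
  Finset.sum_nonneg fun a _ => mul_nonneg (hpol0 h hh s b a) (hP0 h hh s a b s')

lemma Uf_nonneg (hγ0 : 0 ≤ γ) (BA : ℝ)
    (hpol0 : ∀ h < H, ∀ s b a, 0 ≤ pol h s b a)
    (hP0 : ∀ h < H, ∀ s a b s', 0 ≤ P h s a b s') :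
    ∀ n, n ≤ H → ∀ s b, 0 ≤ Uf η γ H pol r P Qt BA (H - n) s b := by
  intro n
  induction n with
  | zero =>
    intro _ s b
    simp only [Nat.sub_zero, Uf]
    rw [cumSB_top]
  | succ n ih =>
    intro hn s b
    have hh : H - (n+1) < H := by omega
    have hs : H - (n+1) + 1 = H - n := by omega
    simp only [Uf]
    rw [cumSB_succ H pol P _ _ _ hh, hs]
    have hκ : (0:ℝ) ≤ Real.exp (2*η*BA) * γ := by positivity
    apply add_nonneg (abs_nonneg _)
    apply mul_nonneg hκ
    apply Finset.sum_nonneg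
    intro a _
    apply mul_nonneg (hpol0 _ hh s b a)
    apply Finset.sum_nonneg
    intro s' _
    apply mul_nonneg (hP0 _ hh s a b s')
    apply Finset.sum_nonneg
    intro b' _
    exact mul_nonneg (qr_pos η γ H pol r P _ s' b').le (ih (by omega) s' b')

lemma Uf_nonneg' (hγ0 : 0 ≤ γ) (BA : ℝ)
    (hpol0 : ∀ h < H, ∀ s b a, 0 ≤ pol h s b a)
    (hP0 : ∀ h < H, ∀ s a b s', 0 ≤ P h s a b s') {h : ℕ} (hh : h ≤ H) (s : S) (b : B) :
    0 ≤ Uf η γ H pol r P Qt BA h s b := by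
  have := Uf_nonneg η γ H pol r P Qt hγ0 BA hpol0 hP0 (H - h) (by omega) s b
  rwa [show H - (H - h) = h by omega] at this

end Struct3

end QSEAux
namespace QSEAux

open QSE

set_option linter.unusedSectionVars false
set_option maxHeartbeats 1000000

section Struct4

variable {S A B : Type} [Fintype S] [Fintype A] [Fintype B]
variable [Nonempty S] [Nonempty A] [Nonempty B]
variable (η γ : ℝ) (H : ℕ) (pol : ℕ → S → B → A → ℝ) (r : ℕ → S → A → B → ℝ)
variable (P : ℕ → S → A → B → S → ℝ) (Qt : ℕ → S → B → ℝ)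

lemma Zt_top (s : S) : Zt η γ H pol r P Qt H s = 0 := by
  rw [Zt, vTil_top, softV_top]
  ring

lemma Zt_eq_qr (hη : 0 < η) {h : ℕ} (hh : h < H) (s : S) :
    Zt η γ H pol r P Qt h s
      = ∑ b, qr η γ H pol r P h s b * (Qt h s b - softQ η γ H pol r P h s b)
        - ∑ b, qr η γ H pol r P h s b * Dv η γ H pol r P Qt h s b := by
  have e1 : ∀ b : B, qr η γ H pol r P h s b * Dv η γ H pol r P Qt h s b
      = qr η γ H pol r P h s b * (Qt h s b - softQ η γ H pol r P h s b)
        - qr η γ H pol r P h s b * Zt η γ H pol r P Qt h s := fun b => by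
    rw [Dv_eq]; ring
  rw [Finset.sum_congr rfl fun b _ => e1 b, Finset.sum_sub_distrib, ← Finset.sum_mul,
    sum_qr_one η γ H pol r P hη hh, one_mul]
  ring

lemma Zt_eq_nuTil (hη : 0 < η) {h : ℕ} (hh : h < H) (s : S) :
    Zt η γ H pol r P Qt h s
      = ∑ b, nuTil η H Qt h s b * (Qt h s b - softQ η γ H pol r P h s b)
        - ∑ b, nuTil η H Qt h s b * Dv η γ H pol r P Qt h s b := by
  have e1 : ∀ b : B, nuTil η H Qt h s b * Dv η γ H pol r P Qt h s b
      = nuTil η H Qt h s b * (Qt h s b - softQ η γ H pol r P h s b)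
        - nuTil η H Qt h s b * Zt η γ H pol r P Qt h s := fun b => by
    rw [Dv_eq]; ring
  rw [Finset.sum_congr rfl fun b _ => e1 b, Finset.sum_sub_distrib, ← Finset.sum_mul,
    sum_nuTil_one η H Qt hη hh, one_mul]
  ring

lemma Uf_succ (BA : ℝ) {h : ℕ} (hh : h < H) (s : S) (b : B) :
    Uf η γ H pol r P Qt BA h s b
      = |bres η γ H pol r P Qt h s b| + (Real.exp (2*η*BA) * γ) *
          ∑ s', pPol pol P h s b s' *
            ∑ b', qr η γ H pol r P (h+1) s' b' * Uf η γ H pol r P Qt BA (h+1) s' b' := by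
  simp only [Uf]
  rw [cumSB_succ H pol P _ _ _ hh, polP_swap]

lemma Zt_abs_le (hη : 0 < η) (hγ0 : 0 ≤ γ) (BA : ℝ) (hBA : 0 < BA)
    (hA : ∀ h < H, ∀ s b, |softA η γ H pol r P h s b| ≤ BA)
    (hAt : ∀ h < H, ∀ s b, |aTil η H Qt h s b| ≤ BA)
    (hpol0 : ∀ h < H, ∀ s b a, 0 ≤ pol h s b a)
    (hP0 : ∀ h < H, ∀ s a b s', 0 ≤ P h s a b s') :
    ∀ n, n ≤ H → ∀ s, |Zt η γ H pol r P Qt (H - n) s|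
      ≤ Real.exp (2*η*BA) * ∑ b, qr η γ H pol r P (H-n) s b *
          Uf η γ H pol r P Qt BA (H-n) s b := by
  intro n
  induction n with
  | zero =>
    intro _ s
    simp only [Nat.sub_zero, Uf]
    rw [Zt_top]
    have : ∀ b : B, qr η γ H pol r P H s b *
        cumSB (Real.exp (2*η*BA) * γ) H pol (qr η γ H pol r P) P
          (fun l s b => |bres η γ H pol r P Qt l s b|) H s b = 0 := by
      intro b; rw [cumSB_top, mul_zero]
    rw [Finset.sum_congr rfl fun b _ => this b]
    simp
  | succ n ih =>
    intro hn s
    have hh : H - (n+1) < H := by omega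
    have hs : H - (n+1) + 1 = H - n := by omega
    have ih' := ih (by omega)
    rw [← hs] at ih'
    -- C1 : bound on |Q̃ - Q| at step H-(n+1)
    have C1 : ∀ (s : S) (b : B), |Qt (H-(n+1)) s b - softQ η γ H pol r P (H-(n+1)) s b|
        ≤ Uf η γ H pol r P Qt BA (H-(n+1)) s b := by
      intro s b
      rw [EE_eq, Uf_succ η γ H pol r P Qt BA hh]
      have step1 : |bres η γ H pol r P Qt (H-(n+1)) s b
            + γ * ∑ s', pPol pol P (H-(n+1)) s b s' * Zt η γ H pol r P Qt (H-(n+1)+1) s'|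
          ≤ |bres η γ H pol r P Qt (H-(n+1)) s b|
            + γ * ∑ s', pPol pol P (H-(n+1)) s b s' * |Zt η γ H pol r P Qt (H-(n+1)+1) s'| := by
        refine le_trans (abs_add_le _ _) ?_
        gcongr
        rw [abs_mul, abs_of_nonneg hγ0]
        apply mul_le_mul_of_nonneg_left _ hγ0
        refine le_trans (Finset.abs_sum_le_sum_abs _ _) ?_
        apply Finset.sum_le_sum
        intro s' _
        rw [abs_mul, abs_of_nonneg (pPol_nonneg H pol P hpol0 hP0 hh s b s')]
      refine le_trans step1 ?_
      have step2 : ∑ s', pPol pol P (H-(n+1)) s b s' * |Zt η γ H pol r P Qt (H-(n+1)+1) s'|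
          ≤ ∑ s', pPol pol P (H-(n+1)) s b s' * (Real.exp (2*η*BA) *
              ∑ b', qr η γ H pol r P (H-(n+1)+1) s' b' *
                Uf η γ H pol r P Qt BA (H-(n+1)+1) s' b') := by
        apply Finset.sum_le_sum
        intro s' _
        exact mul_le_mul_of_nonneg_left (ih' s') (pPol_nonneg H pol P hpol0 hP0 hh s b s')
      have step3 : γ * ∑ s', pPol pol P (H-(n+1)) s b s' * (Real.exp (2*η*BA) *
              ∑ b', qr η γ H pol r P (H-(n+1)+1) s' b' *
                Uf η γ H pol r P Qt BA (H-(n+1)+1) s' b')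
          = (Real.exp (2*η*BA) * γ) * ∑ s', pPol pol P (H-(n+1)) s b s' *
              ∑ b', qr η γ H pol r P (H-(n+1)+1) s' b' *
                Uf η γ H pol r P Qt BA (H-(n+1)+1) s' b' := by
        simp only [Finset.mul_sum]
        exact Finset.sum_congr rfl fun s' _ => Finset.sum_congr rfl fun b' _ => by ring
      rw [← step3]
      have := mul_le_mul_of_nonneg_left step2 hγ0
      linarith
    -- C2 : bound on |Z| at step H-(n+1)
    have hU0 : ∀ (s : S) (b : B), 0 ≤ Uf η γ H pol r P Qt BA (H-(n+1)) s b :=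
      fun s b => Uf_nonneg' η γ H pol r P Qt hγ0 BA hpol0 hP0 (by omega) s b
    have hec1 : (1:ℝ) ≤ Real.exp (2*η*BA) := by
      rw [show (1:ℝ) = Real.exp 0 by simp]
      apply Real.exp_le_exp.mpr
      positivity
    have hsumU : 0 ≤ ∑ b, qr η γ H pol r P (H-(n+1)) s b * Uf η γ H pol r P Qt BA (H-(n+1)) s b :=
      Finset.sum_nonneg fun b _ => mul_nonneg (qr_pos η γ H pol r P _ s b).le (hU0 s b)
    rw [abs_le]
    constructor
    · -- lower bound
      rw [Zt_eq_qr η γ H pol r P Qt hη hh]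
      have l1 : ∑ b, qr η γ H pol r P (H-(n+1)) s b *
          (Qt (H-(n+1)) s b - softQ η γ H pol r P (H-(n+1)) s b)
          ≥ -∑ b, qr η γ H pol r P (H-(n+1)) s b * Uf η γ H pol r P Qt BA (H-(n+1)) s b := by
        rw [← Finset.sum_neg_distrib]
        apply Finset.sum_le_sum
        intro b _
        have hq := (qr_pos η γ H pol r P (H-(n+1)) s b).le
        have := C1 s b
        have h2 := neg_abs_le (Qt (H-(n+1)) s b - softQ η γ H pol r P (H-(n+1)) s b)
        nlinarith
      have l2 := sum_qr_Dv_nonpos η γ H pol r P Qt hη hh s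
      have l3 : ∑ b, qr η γ H pol r P (H-(n+1)) s b * Uf η γ H pol r P Qt BA (H-(n+1)) s b
          ≤ Real.exp (2*η*BA) * ∑ b, qr η γ H pol r P (H-(n+1)) s b *
              Uf η γ H pol r P Qt BA (H-(n+1)) s b := by
        nlinarith
      linarith
    · -- upper bound
      rw [Zt_eq_nuTil η γ H pol r P Qt hη hh]
      have u0 := sum_nuTil_Dv_nonneg η γ H pol r P Qt hη hh s
      have u1 : ∑ b, nuTil η H Qt (H-(n+1)) s b *
          (Qt (H-(n+1)) s b - softQ η γ H pol r P (H-(n+1)) s b)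
          ≤ Real.exp (2*η*BA) * ∑ b, qr η γ H pol r P (H-(n+1)) s b *
              Uf η γ H pol r P Qt BA (H-(n+1)) s b := by
        rw [Finset.mul_sum]
        apply Finset.sum_le_sum
        intro b _
        have hnt : 0 ≤ nuTil η H Qt (H-(n+1)) s b := (Real.exp_pos _).le
        have step_a : nuTil η H Qt (H-(n+1)) s b *
            (Qt (H-(n+1)) s b - softQ η γ H pol r P (H-(n+1)) s b)
            ≤ nuTil η H Qt (H-(n+1)) s b * Uf η γ H pol r P Qt BA (H-(n+1)) s b := by
          apply mul_le_mul_of_nonneg_left _ hnt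
          exact le_trans (le_abs_self _) (C1 s b)
        refine le_trans step_a ?_
        rw [nuTil_eq η γ H pol r P Qt]
        have hD : Real.exp (η * (aTil η H Qt (H-(n+1)) s b - softA η γ H pol r P (H-(n+1)) s b))
            ≤ Real.exp (2*η*BA) := by
          apply Real.exp_le_exp.mpr
          have habs := absDv_le η γ H pol r P Qt BA hA hAt hh s b
          have : Dv η γ H pol r P Qt (H-(n+1)) s b ≤ 2*BA := le_trans (le_abs_self _) habs
          have := mul_le_mul_of_nonneg_left this hη.le
          rw [Dv] at this
          nlinarith
        have hq := (qr_pos η γ H pol r P (H-(n+1)) s b).le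
        have hu := hU0 s b
        calc qr η γ H pol r P (H-(n+1)) s b *
              Real.exp (η * (aTil η H Qt (H-(n+1)) s b - softA η γ H pol r P (H-(n+1)) s b)) *
              Uf η γ H pol r P Qt BA (H-(n+1)) s b
            ≤ qr η γ H pol r P (H-(n+1)) s b * Real.exp (2*η*BA) *
              Uf η γ H pol r P Qt BA (H-(n+1)) s b := by
              apply mul_le_mul_of_nonneg_right _ hu
              exact mul_le_mul_of_nonneg_left hD hq
          _ = Real.exp (2*η*BA) * (qr η γ H pol r P (H-(n+1)) s b *
              Uf η γ H pol r P Qt BA (H-(n+1)) s b) := by ring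
      linarith

lemma Zt_abs_le' (hη : 0 < η) (hγ0 : 0 ≤ γ) (BA : ℝ) (hBA : 0 < BA)
    (hA : ∀ h < H, ∀ s b, |softA η γ H pol r P h s b| ≤ BA)
    (hAt : ∀ h < H, ∀ s b, |aTil η H Qt h s b| ≤ BA)
    (hpol0 : ∀ h < H, ∀ s b a, 0 ≤ pol h s b a)
    (hP0 : ∀ h < H, ∀ s a b s', 0 ≤ P h s a b s')
    {h : ℕ} (hh : h ≤ H) (s : S) :
    |Zt η γ H pol r P Qt h s| ≤ Real.exp (2*η*BA) *
      ∑ b, qr η γ H pol r P h s b * Uf η γ H pol r P Qt BA h s b := by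
  have := Zt_abs_le η γ H pol r P Qt hη hγ0 BA hBA hA hAt hpol0 hP0 (H-h) (by omega) s
  rwa [show H - (H-h) = h by omega] at this

end Struct4

end QSEAux
namespace QSEAux

open QSE

set_option linter.unusedSectionVars false
set_option maxHeartbeats 1000000

section Struct5

variable {S A B : Type} [Fintype S] [Fintype A] [Fintype B]
variable [Nonempty S] [Nonempty A] [Nonempty B]
variable (η γ : ℝ) (H : ℕ) (pol : ℕ → S → B → A → ℝ) (r : ℕ → S → A → B → ℝ)
variable (P : ℕ → S → A → B → S → ℝ) (Qt : ℕ → S → B → ℝ)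

lemma absEE_le (hη : 0 < η) (hγ0 : 0 ≤ γ) (BA : ℝ) (hBA : 0 < BA)
    (hA : ∀ h < H, ∀ s b, |softA η γ H pol r P h s b| ≤ BA)
    (hAt : ∀ h < H, ∀ s b, |aTil η H Qt h s b| ≤ BA)
    (hpol0 : ∀ h < H, ∀ s b a, 0 ≤ pol h s b a)
    (hP0 : ∀ h < H, ∀ s a b s', 0 ≤ P h s a b s')
    {h : ℕ} (hh : h < H) (s : S) (b : B) :
    |Qt h s b - softQ η γ H pol r P h s b| ≤ Uf η γ H pol r P Qt BA h s b := by
  rw [EE_eq, Uf_succ η γ H pol r P Qt BA hh]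
  have step1 : |bres η γ H pol r P Qt h s b
        + γ * ∑ s', pPol pol P h s b s' * Zt η γ H pol r P Qt (h+1) s'|
      ≤ |bres η γ H pol r P Qt h s b|
        + γ * ∑ s', pPol pol P h s b s' * |Zt η γ H pol r P Qt (h+1) s'| := by
    refine le_trans (abs_add_le _ _) ?_
    gcongr
    rw [abs_mul, abs_of_nonneg hγ0]
    apply mul_le_mul_of_nonneg_left _ hγ0
    refine le_trans (Finset.abs_sum_le_sum_abs _ _) ?_
    apply Finset.sum_le_sum
    intro s' _
    rw [abs_mul, abs_of_nonneg (pPol_nonneg H pol P hpol0 hP0 hh s b s')]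
  refine le_trans step1 ?_
  have step2 : ∑ s', pPol pol P h s b s' * |Zt η γ H pol r P Qt (h+1) s'|
      ≤ ∑ s', pPol pol P h s b s' * (Real.exp (2*η*BA) *
          ∑ b', qr η γ H pol r P (h+1) s' b' * Uf η γ H pol r P Qt BA (h+1) s' b') := by
    apply Finset.sum_le_sum
    intro s' _
    exact mul_le_mul_of_nonneg_left
      (Zt_abs_le' η γ H pol r P Qt hη hγ0 BA hBA hA hAt hpol0 hP0 (by omega) s')
      (pPol_nonneg H pol P hpol0 hP0 hh s b s')
  have step3 : γ * ∑ s', pPol pol P h s b s' * (Real.exp (2*η*BA) *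
          ∑ b', qr η γ H pol r P (h+1) s' b' * Uf η γ H pol r P Qt BA (h+1) s' b')
      = (Real.exp (2*η*BA) * γ) * ∑ s', pPol pol P h s b s' *
          ∑ b', qr η γ H pol r P (h+1) s' b' * Uf η γ H pol r P Qt BA (h+1) s' b' := by
    simp only [Finset.mul_sum]
    exact Finset.sum_congr rfl fun s' _ => Finset.sum_congr rfl fun b' _ => by ring
  rw [← step3]
  have := mul_le_mul_of_nonneg_left step2 hγ0
  linarith

lemma absDv_le_U (hη : 0 < η) (hγ0 : 0 ≤ γ) (BA : ℝ) (hBA : 0 < BA)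
    (hA : ∀ h < H, ∀ s b, |softA η γ H pol r P h s b| ≤ BA)
    (hAt : ∀ h < H, ∀ s b, |aTil η H Qt h s b| ≤ BA)
    (hpol0 : ∀ h < H, ∀ s b a, 0 ≤ pol h s b a)
    (hP0 : ∀ h < H, ∀ s a b s', 0 ≤ P h s a b s')
    {h : ℕ} (hh : h < H) (s : S) (b : B) :
    |Dv η γ H pol r P Qt h s b| ≤ Uf η γ H pol r P Qt BA h s b
      + Real.exp (2*η*BA) * ∑ b', qr η γ H pol r P h s b' *
          Uf η γ H pol r P Qt BA h s b' := by
  rw [Dv_eq]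
  refine le_trans (abs_sub _ _) ?_
  gcongr
  · exact absEE_le η γ H pol r P Qt hη hγ0 BA hBA hA hAt hpol0 hP0 hh s b
  · exact Zt_abs_le' η γ H pol r P Qt hη hγ0 BA hBA hA hAt hpol0 hP0 (le_of_lt hh) s

lemma margS_nonneg (rho0 : S → ℝ) (hrho0 : ∀ s, 0 ≤ rho0 s)
    (hpol0 : ∀ h < H, ∀ s b a, 0 ≤ pol h s b a)
    (hP0 : ∀ h < H, ∀ s a b s', 0 ≤ P h s a b s') :
    ∀ h, h ≤ H → ∀ s, 0 ≤ margS rho0 pol (qr η γ H pol r P) P h s := by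
  intro h
  induction h with
  | zero => intro _ s; exact hrho0 s
  | succ h ih =>
    intro hh s'
    have hhH : h < H := by omega
    simp only [margS]
    apply Finset.sum_nonneg; intro s _
    apply Finset.sum_nonneg; intro b _
    apply Finset.sum_nonneg; intro a _
    have := ih (by omega) s
    have hq := (qr_pos η γ H pol r P h s b).le
    have hp := hpol0 h hhH s b a
    have hP := hP0 h hhH s a b s'
    positivity

lemma tower (rho0 : S → ℝ) (h : ℕ) (f : S → ℝ) :
    ∑ s', margS rho0 pol (qr η γ H pol r P) P (h+1) s' * f s'
      = ∑ s, margS rho0 pol (qr η γ H pol r P) P h s *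
          ∑ b, qr η γ H pol r P h s b *
            ∑ a, pol h s b a * ∑ s', P h s a b s' * f s' := by
  simp only [margS, Finset.sum_mul, Finset.mul_sum]
  rw [Finset.sum_comm]
  refine Finset.sum_congr rfl fun s _ => ?_
  rw [Finset.sum_comm]
  refine Finset.sum_congr rfl fun b _ => ?_
  rw [Finset.sum_comm]
  exact Finset.sum_congr rfl fun a _ => Finset.sum_congr rfl fun s' _ => by ring

lemma sq_sum_le {ι : Type*} [Fintype ι] (w x : ι → ℝ) (hw : ∀ i, 0 ≤ w i)
    (hw1 : ∑ i, w i = 1) : (∑ i, w i * x i) ^ 2 ≤ ∑ i, w i * x i ^ 2 := by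
  have key := Finset.sum_mul_sq_le_sq_mul_sq Finset.univ
    (fun i => Real.sqrt (w i)) (fun i => Real.sqrt (w i) * x i)
  have e1 : ∀ i : ι, Real.sqrt (w i) * (Real.sqrt (w i) * x i) = w i * x i := by
    intro i
    rw [← mul_assoc, Real.mul_self_sqrt (hw i)]
  have e2 : ∀ i : ι, Real.sqrt (w i) ^ 2 = w i := fun i => Real.sq_sqrt (hw i)
  have e3 : ∀ i : ι, (Real.sqrt (w i) * x i) ^ 2 = w i * x i ^ 2 := by
    intro i
    rw [mul_pow, e2 i]
  rw [Finset.sum_congr rfl fun i _ => e1 i, Finset.sum_congr rfl fun i _ => e2 i,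
    Finset.sum_congr rfl fun i _ => e3 i, hw1, one_mul] at key
  exact key

lemma Gf_succ {h : ℕ} (hh : h < H) (s : S) (b : B) :
    Gf η γ H pol r P Qt h s b = bres η γ H pol r P Qt h s b
      + γ * ∑ s', pPol pol P h s b s' * Ff η γ H pol r P Qt (h+1) s' := by
  simp only [Gf, Ff]
  rw [cumSB_succ H pol P _ _ _ hh, polP_swap]

lemma Gf_top (s : S) (b : B) : Gf η γ H pol r P Qt H s b = 0 := by
  simp only [Gf]
  rw [cumSB_top]

lemma Ff_top (s : S) : Ff η γ H pol r P Qt H s = 0 := by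
  simp only [Ff]
  rw [Finset.sum_congr rfl fun b _ => by rw [Gf_top η γ H pol r P Qt s b, mul_zero]]
  exact Finset.sum_const_zero

lemma Wf_top (s : S) : Wf η γ H pol r P Qt H s = 0 := by
  rw [Wf, Zt_top, Ff_top]
  ring

lemma Wf_succ (hη : 0 < η) {h : ℕ} (hh : h < H) (s : S) :
    Wf η γ H pol r P Qt h s
      = (-∑ b, qr η γ H pol r P h s b * Dv η γ H pol r P Qt h s b)
        + γ * ∑ b, qr η γ H pol r P h s b *
            ∑ s', pPol pol P h s b s' * Wf η γ H pol r P Qt (h+1) s' := by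
  have key : ∀ b : B, qr η γ H pol r P h s b * (Qt h s b - softQ η γ H pol r P h s b)
      - qr η γ H pol r P h s b * Gf η γ H pol r P Qt h s b
      = γ * (qr η γ H pol r P h s b * ∑ s', pPol pol P h s b s' *
          Wf η γ H pol r P Qt (h+1) s') := by
    intro b
    rw [EE_eq, Gf_succ η γ H pol r P Qt hh]
    have e : ∑ s', pPol pol P h s b s' * Zt η γ H pol r P Qt (h+1) s'
        - ∑ s', pPol pol P h s b s' * Ff η γ H pol r P Qt (h+1) s'
        = ∑ s', pPol pol P h s b s' * Wf η γ H pol r P Qt (h+1) s' := by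
      rw [← Finset.sum_sub_distrib]
      exact Finset.sum_congr rfl fun s' _ => by rw [Wf]; ring
    rw [← e]
    ring
  have expand : Wf η γ H pol r P Qt h s
      = (∑ b, (qr η γ H pol r P h s b * (Qt h s b - softQ η γ H pol r P h s b)
          - qr η γ H pol r P h s b * Gf η γ H pol r P Qt h s b))
        - ∑ b, qr η γ H pol r P h s b * Dv η γ H pol r P Qt h s b := by
    rw [Wf, Zt_eq_qr η γ H pol r P Qt hη hh, Ff, Finset.sum_sub_distrib]
    ring
  rw [expand, Finset.sum_congr rfl fun b _ => key b, ← Finset.mul_sum]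
  have e2 : ∑ b, qr η γ H pol r P h s b * ∑ s', pPol pol P h s b s' *
      Wf η γ H pol r P Qt (h+1) s'
      = ∑ b, qr η γ H pol r P h s b * (∑ s', pPol pol P h s b s' *
          Wf η γ H pol r P Qt (h+1) s') := rfl
  ring

lemma Wf_nonneg (hη : 0 < η) (hγ0 : 0 ≤ γ)
    (hpol0 : ∀ h < H, ∀ s b a, 0 ≤ pol h s b a)
    (hP0 : ∀ h < H, ∀ s a b s', 0 ≤ P h s a b s') :
    ∀ n, n ≤ H → ∀ s, 0 ≤ Wf η γ H pol r P Qt (H - n) s := by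
  intro n
  induction n with
  | zero => intro _ s; rw [Nat.sub_zero, Wf_top]
  | succ n ih =>
    intro hn s
    have hh : H - (n+1) < H := by omega
    have hs : H - (n+1) + 1 = H - n := by omega
    rw [Wf_succ η γ H pol r P Qt hη hh, hs]
    have h1 : 0 ≤ -∑ b, qr η γ H pol r P (H-(n+1)) s b * Dv η γ H pol r P Qt (H-(n+1)) s b := by
      linarith [sum_qr_Dv_nonpos η γ H pol r P Qt hη hh s]
    have h2 : 0 ≤ ∑ b, qr η γ H pol r P (H-(n+1)) s b *
        ∑ s', pPol pol P (H-(n+1)) s b s' * Wf η γ H pol r P Qt (H-n) s' := by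
      apply Finset.sum_nonneg; intro b _
      apply mul_nonneg (qr_pos η γ H pol r P _ s b).le
      apply Finset.sum_nonneg; intro s' _
      exact mul_nonneg (pPol_nonneg H pol P hpol0 hP0 hh s b s') (ih (by omega) s')
    nlinarith

lemma Wf_nonneg' (hη : 0 < η) (hγ0 : 0 ≤ γ)
    (hpol0 : ∀ h < H, ∀ s b a, 0 ≤ pol h s b a)
    (hP0 : ∀ h < H, ∀ s a b s', 0 ≤ P h s a b s')
    {h : ℕ} (hh : h ≤ H) (s : S) : 0 ≤ Wf η γ H pol r P Qt h s := by
  have := Wf_nonneg η γ H pol r P Qt hη hγ0 hpol0 hP0 (H-h) (by omega) s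
  rwa [show H - (H-h) = h by omega] at this

end Struct5

end QSEAux
namespace QSEAux

open QSE

set_option linter.unusedSectionVars false
set_option maxHeartbeats 2000000

lemma effH_nonneg {x : ℝ} (hx : 0 ≤ x) (n : ℕ) : 0 ≤ effH n x :=
  Finset.sum_nonneg fun i _ => pow_nonneg hx i

lemma effH_mono {x : ℝ} (hx : 0 ≤ x) {n m : ℕ} (hnm : n ≤ m) : effH n x ≤ effH m x :=
  Finset.sum_le_sum_of_subset_of_nonneg (Finset.range_subset_range.mpr hnm)
    (fun i _ _ => pow_nonneg hx i)

lemma effH_succ' (x : ℝ) (n : ℕ) : effH (n+1) x = 1 + x * effH n x := by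
  rw [effH, effH, Finset.sum_range_succ']
  have : ∀ i : ℕ, x ^ (i+1) = x * x ^ i := fun i => by ring
  rw [Finset.sum_congr rfl fun i _ => this i, ← Finset.mul_sum]
  simp
  ring

lemma effH_one (x : ℝ) : effH 1 x = 1 := by
  rw [effH]
  simp

lemma effH_one_le {x : ℝ} (hx : 0 ≤ x) (n : ℕ) : 1 ≤ effH (n+1) x := by
  rw [effH_succ' x n]
  nlinarith [effH_nonneg hx n]

section Struct6

variable {S A B : Type} [Fintype S] [Fintype A] [Fintype B]
variable [Nonempty S] [Nonempty A] [Nonempty B]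
variable (η γ : ℝ) (H : ℕ) (pol : ℕ → S → B → A → ℝ) (r : ℕ → S → A → B → ℝ)
variable (P : ℕ → S → A → B → S → ℝ) (Qt : ℕ → S → B → ℝ)

lemma sum_pPol_one (hpol1 : ∀ h < H, ∀ s b, ∑ a, pol h s b a = 1)
    (hP1 : ∀ h < H, ∀ s a b, ∑ s', P h s a b s' = 1)
    {h : ℕ} (hh : h < H) (s : S) (b : B) : ∑ s', pPol pol P h s b s' = 1 := by
  simp only [pPol]
  rw [Finset.sum_comm]
  have : ∀ a : A, ∑ s', pol h s b a * P h s a b s' = pol h s b a := by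
    intro a
    rw [← Finset.mul_sum, hP1 h hh s a b, mul_one]
  rw [Finset.sum_congr rfl fun a _ => this a]
  exact hpol1 h hh s b

/-- Per-step expected squared `U` bound, by downward induction. -/
lemma EU2_le (hη : 0 < η) (hγ0 : 0 ≤ γ) (BA : ℝ) (hBA : 0 < BA)
    (rho0 : S → ℝ) (hrho0 : ∀ s, 0 ≤ rho0 s)
    (hpol0 : ∀ h < H, ∀ s b a, 0 ≤ pol h s b a)
    (hpol1 : ∀ h < H, ∀ s b, ∑ a, pol h s b a = 1)
    (hP0 : ∀ h < H, ∀ s a b s', 0 ≤ P h s a b s')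
    (hP1 : ∀ h < H, ∀ s a b, ∑ s', P h s a b s' = 1)
    (M : ℝ) (hM0 : 0 ≤ M)
    (hM : ∀ l, l < H → (∑ s, margS rho0 pol (qr η γ H pol r P) P l s *
        ∑ b, qr η γ H pol r P l s b * (bres η γ H pol r P Qt l s b)^2) ≤ M) :
    ∀ n, n ≤ H → (∑ s, margS rho0 pol (qr η γ H pol r P) P (H-n) s *
        ∑ b, qr η γ H pol r P (H-n) s b * (Uf η γ H pol r P Qt BA (H-n) s b)^2)
      ≤ (effH n (Real.exp (2*η*BA) * γ))^2 * M := by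
  intro n
  induction n with
  | zero =>
    intro _
    simp only [Nat.sub_zero]
    have hU : ∀ (s : S) (b : B), Uf η γ H pol r P Qt BA H s b = 0 := by
      intro s b
      simp only [Uf]
      rw [cumSB_top]
    have hz : ∀ s : S, ∑ b, qr η γ H pol r P H s b * (Uf η γ H pol r P Qt BA H s b)^2
        = 0 := by
      intro s
      apply Finset.sum_eq_zero
      intro b _
      rw [hU s b, show ((0:ℝ))^2 = 0 by norm_num, mul_zero]
    have h2 : (∑ s, margS rho0 pol (qr η γ H pol r P) P H s *
        ∑ b, qr η γ H pol r P H s b * (Uf η γ H pol r P Qt BA H s b)^2) = 0 := by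
      apply Finset.sum_eq_zero
      intro s _
      rw [hz s, mul_zero]
    rw [h2, effH]
    simp
  | succ n ih =>
    intro hn
    have hh : H - (n+1) < H := by omega
    have hs : H - (n+1) + 1 = H - n := by omega
    set κ : ℝ := Real.exp (2*η*BA) * γ with hκdef
    have hκ0 : 0 ≤ κ := mul_nonneg (Real.exp_pos _).le hγ0
    set h : ℕ := H - (n+1) with hdef
    -- abbreviations
    set PY : S → B → ℝ := fun s b => ∑ s', pPol pol P h s b s' *
      ∑ b', qr η γ H pol r P (h+1) s' b' * Uf η γ H pol r P Qt BA (h+1) s' b' with hPY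
    have hUsucc : ∀ (s : S) (b : B), Uf η γ H pol r P Qt BA h s b
        = |bres η γ H pol r P Qt h s b| + κ * PY s b := fun s b =>
      Uf_succ η γ H pol r P Qt BA hh s b
    have hmu0 : ∀ s : S, 0 ≤ margS rho0 pol (qr η γ H pol r P) P h s :=
      margS_nonneg η γ H pol r P rho0 hrho0 hpol0 hP0 h (by omega)
    have hMh := hM h hh
    -- tower bound for the PY² term
    have hPYsq : ∀ (s : S) (b : B), (PY s b)^2 ≤ ∑ s', pPol pol P h s b s' *
        ∑ b', qr η γ H pol r P (h+1) s' b' * (Uf η γ H pol r P Qt BA (h+1) s' b')^2 := by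
      intro s b
      by_cases hn0 : n = 0
      · -- then Uf (h+1) = Uf H = 0
        have hU0 : ∀ (s' : S) (b' : B), Uf η γ H pol r P Qt BA (h+1) s' b' = 0 := by
          intro s' b'
          have : h + 1 = H := by omega
          rw [this]
          simp only [Uf]
          rw [cumSB_top]
        have hz : PY s b = 0 := by
          simp only [hPY]
          apply Finset.sum_eq_zero
          intro s' _
          have : (∑ b', qr η γ H pol r P (h+1) s' b' * Uf η γ H pol r P Qt BA (h+1) s' b')
              = 0 := Finset.sum_eq_zero fun b' _ => by rw [hU0 s' b', mul_zero]
          rw [this, mul_zero]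
        rw [hz, show ((0:ℝ))^2 = 0 by norm_num]
        apply Finset.sum_nonneg
        intro s' _
        apply mul_nonneg (pPol_nonneg H pol P hpol0 hP0 hh s b s')
        apply Finset.sum_nonneg
        intro b' _
        exact mul_nonneg (qr_pos η γ H pol r P _ s' b').le (sq_nonneg _)
      · have hh1 : h + 1 < H := by omega
        have step1 : (PY s b)^2 ≤ ∑ s', pPol pol P h s b s' *
            (∑ b', qr η γ H pol r P (h+1) s' b' * Uf η γ H pol r P Qt BA (h+1) s' b')^2 := by
          apply sq_sum_le
          · exact fun s' => pPol_nonneg H pol P hpol0 hP0 hh s b s'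
          · exact sum_pPol_one H pol P hpol1 hP1 hh s b
        refine le_trans step1 ?_
        apply Finset.sum_le_sum
        intro s' _
        apply mul_le_mul_of_nonneg_left _ (pPol_nonneg H pol P hpol0 hP0 hh s b s')
        apply sq_sum_le
        · exact fun b' => (qr_pos η γ H pol r P _ s' b').le
        · exact sum_qr_one η γ H pol r P hη hh1 s'
    -- expectation of the PY² upper bound equals next-step expectation (tower)
    have htower : (∑ s, margS rho0 pol (qr η γ H pol r P) P h s *
          ∑ b, qr η γ H pol r P h s b * (∑ s', pPol pol P h s b s' *
            ∑ b', qr η γ H pol r P (h+1) s' b' * (Uf η γ H pol r P Qt BA (h+1) s' b')^2))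
        = ∑ s', margS rho0 pol (qr η γ H pol r P) P (h+1) s' *
            ∑ b', qr η γ H pol r P (h+1) s' b' * (Uf η γ H pol r P Qt BA (h+1) s' b')^2 := by
      rw [tower η γ H pol r P rho0 h (fun s' => ∑ b', qr η γ H pol r P (h+1) s' b' *
        (Uf η γ H pol r P Qt BA (h+1) s' b')^2)]
      refine Finset.sum_congr rfl fun s _ => ?_
      congr 1
      refine Finset.sum_congr rfl fun b _ => ?_
      congr 1
      rw [polP_swap]
    have hBq : (∑ s, margS rho0 pol (qr η γ H pol r P) P h s *
          ∑ b, qr η γ H pol r P h s b * (PY s b)^2)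
        ≤ (effH n κ)^2 * M := by
      have step : (∑ s, margS rho0 pol (qr η γ H pol r P) P h s *
            ∑ b, qr η γ H pol r P h s b * (PY s b)^2)
          ≤ ∑ s, margS rho0 pol (qr η γ H pol r P) P h s *
            ∑ b, qr η γ H pol r P h s b * (∑ s', pPol pol P h s b s' *
              ∑ b', qr η γ H pol r P (h+1) s' b' * (Uf η γ H pol r P Qt BA (h+1) s' b')^2) := by
        apply Finset.sum_le_sum
        intro s _
        apply mul_le_mul_of_nonneg_left _ (hmu0 s)
        apply Finset.sum_le_sum
        intro b _
        exact mul_le_mul_of_nonneg_left (hPYsq s b) (qr_pos η γ H pol r P _ s b).le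
      refine le_trans step ?_
      rw [htower]
      have := ih (by omega)
      rw [← hs] at this
      exact this
    -- now the main estimate
    by_cases hdeg : κ * effH n κ = 0
    · -- degenerate: κ = 0 or n = 0; then the cross terms vanish appropriately
      have hU2 : ∀ (s : S) (b : B), (Uf η γ H pol r P Qt BA h s b)^2
          ≤ (bres η γ H pol r P Qt h s b)^2 + κ^2 * (PY s b)^2 := by
        intro s b
        rw [hUsucc s b]
        have h2 : |bres η γ H pol r P Qt h s b| * (κ * PY s b) = 0 := by
          rcases mul_eq_zero.mp hdeg with hk | he
          · rw [hk]; ring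
          · -- effH n κ = 0 means n = 0 (since for n ≥ 1 it is ≥ ... ) or κ = 0 contributes
            by_cases hn0 : n = 0
            · have hU0' : ∀ (s' : S) (b' : B), Uf η γ H pol r P Qt BA (h+1) s' b' = 0 := by
                intro s' b'
                have he : h + 1 = H := by omega
                rw [he]
                simp only [Uf]
                rw [cumSB_top]
              have hU0 : PY s b = 0 := by
                simp only [hPY]
                apply Finset.sum_eq_zero
                intro s' _
                have : (∑ b', qr η γ H pol r P (h+1) s' b' * Uf η γ H pol r P Qt BA (h+1) s' b')
                    = 0 := Finset.sum_eq_zero fun b' _ => by rw [hU0' s' b', mul_zero]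
                rw [this, mul_zero]
              rw [hU0]; ring
            · exfalso
              have h1 : 1 ≤ effH n κ := by
                rcases Nat.exists_eq_succ_of_ne_zero hn0 with ⟨m, hm⟩
                rw [hm]
                exact effH_one_le hκ0 m
              linarith [he ▸ h1]
        nlinarith [sq_abs (bres η γ H pol r P Qt h s b), h2]
      have main : (∑ s, margS rho0 pol (qr η γ H pol r P) P h s *
            ∑ b, qr η γ H pol r P h s b * (Uf η γ H pol r P Qt BA h s b)^2)
          ≤ M + κ^2 * ((effH n κ)^2 * M) := by
        have e1 : ∀ s : S, ∑ b, qr η γ H pol r P h s b * (Uf η γ H pol r P Qt BA h s b)^2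
            ≤ ∑ b, qr η γ H pol r P h s b *
              ((bres η γ H pol r P Qt h s b)^2 + κ^2 * (PY s b)^2) :=
          fun s => Finset.sum_le_sum fun b _ =>
            mul_le_mul_of_nonneg_left (hU2 s b) (qr_pos η γ H pol r P _ s b).le
        have e2 : (∑ s, margS rho0 pol (qr η γ H pol r P) P h s *
              ∑ b, qr η γ H pol r P h s b *
                ((bres η γ H pol r P Qt h s b)^2 + κ^2 * (PY s b)^2))
            = (∑ s, margS rho0 pol (qr η γ H pol r P) P h s *
                ∑ b, qr η γ H pol r P h s b * (bres η γ H pol r P Qt h s b)^2)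
              + κ^2 * (∑ s, margS rho0 pol (qr η γ H pol r P) P h s *
                ∑ b, qr η γ H pol r P h s b * (PY s b)^2) := by
          rw [Finset.mul_sum, ← Finset.sum_add_distrib]
          refine Finset.sum_congr rfl fun s _ => ?_
          rw [show ∑ b, qr η γ H pol r P h s b *
              ((bres η γ H pol r P Qt h s b)^2 + κ^2 * (PY s b)^2)
              = (∑ b, qr η γ H pol r P h s b * (bres η γ H pol r P Qt h s b)^2)
                + κ^2 * ∑ b, qr η γ H pol r P h s b * (PY s b)^2 by
            rw [Finset.mul_sum, ← Finset.sum_add_distrib]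
            exact Finset.sum_congr rfl fun b _ => by ring]
          ring
        calc (∑ s, margS rho0 pol (qr η γ H pol r P) P h s *
              ∑ b, qr η γ H pol r P h s b * (Uf η γ H pol r P Qt BA h s b)^2)
            ≤ (∑ s, margS rho0 pol (qr η γ H pol r P) P h s *
              ∑ b, qr η γ H pol r P h s b *
                ((bres η γ H pol r P Qt h s b)^2 + κ^2 * (PY s b)^2)) :=
              Finset.sum_le_sum fun s _ => mul_le_mul_of_nonneg_left (e1 s) (hmu0 s)
          _ = _ := e2
          _ ≤ M + κ^2 * ((effH n κ)^2 * M) := by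
              have := mul_le_mul_of_nonneg_left hBq (sq_nonneg κ)
              linarith [hMh]
      refine le_trans main ?_
      rw [effH_succ' κ n]
      have he0 : κ * effH n κ = 0 := hdeg
      nlinarith [hM0, he0]
    · -- nondegenerate case : t := κ * effH n κ > 0
      have hen0 : 0 ≤ effH n κ := effH_nonneg hκ0 n
      have ht : 0 < κ * effH n κ := by
        rcases lt_or_eq_of_le (mul_nonneg hκ0 hen0) with h' | h'
        · exact h'
        · exact absurd h'.symm hdeg
      set t : ℝ := κ * effH n κ with htdef
      have hU2 : ∀ (s : S) (b : B), (Uf η γ H pol r P Qt BA h s b)^2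
          ≤ (1+t) * (bres η γ H pol r P Qt h s b)^2 + (1+t⁻¹) * (κ^2 * (PY s b)^2) := by
        intro s b
        rw [hUsucc s b]
        have h2 := two_mul_le_t (a := |bres η γ H pol r P Qt h s b|) (b := κ * PY s b) ht
        nlinarith [sq_abs (bres η γ H pol r P Qt h s b)]
      have main : (∑ s, margS rho0 pol (qr η γ H pol r P) P h s *
            ∑ b, qr η γ H pol r P h s b * (Uf η γ H pol r P Qt BA h s b)^2)
          ≤ (1+t) * M + (1+t⁻¹) * (κ^2 * ((effH n κ)^2 * M)) := by
        have e1 : ∀ s : S, ∑ b, qr η γ H pol r P h s b * (Uf η γ H pol r P Qt BA h s b)^2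
            ≤ ∑ b, qr η γ H pol r P h s b *
              ((1+t) * (bres η γ H pol r P Qt h s b)^2 + (1+t⁻¹) * (κ^2 * (PY s b)^2)) :=
          fun s => Finset.sum_le_sum fun b _ =>
            mul_le_mul_of_nonneg_left (hU2 s b) (qr_pos η γ H pol r P _ s b).le
        have e2 : (∑ s, margS rho0 pol (qr η γ H pol r P) P h s *
              ∑ b, qr η γ H pol r P h s b *
                ((1+t) * (bres η γ H pol r P Qt h s b)^2 + (1+t⁻¹) * (κ^2 * (PY s b)^2)))
            = (1+t) * (∑ s, margS rho0 pol (qr η γ H pol r P) P h s *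
                ∑ b, qr η γ H pol r P h s b * (bres η γ H pol r P Qt h s b)^2)
              + (1+t⁻¹) * κ^2 * (∑ s, margS rho0 pol (qr η γ H pol r P) P h s *
                ∑ b, qr η γ H pol r P h s b * (PY s b)^2) := by
          rw [Finset.mul_sum, Finset.mul_sum, ← Finset.sum_add_distrib]
          refine Finset.sum_congr rfl fun s _ => ?_
          rw [show ∑ b, qr η γ H pol r P h s b *
              ((1+t) * (bres η γ H pol r P Qt h s b)^2 + (1+t⁻¹) * (κ^2 * (PY s b)^2))
              = (1+t) * (∑ b, qr η γ H pol r P h s b * (bres η γ H pol r P Qt h s b)^2)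
                + (1+t⁻¹) * κ^2 * ∑ b, qr η γ H pol r P h s b * (PY s b)^2 by
            rw [Finset.mul_sum, Finset.mul_sum, ← Finset.sum_add_distrib]
            exact Finset.sum_congr rfl fun b _ => by ring]
          ring
        have step :(∑ s, margS rho0 pol (qr η γ H pol r P) P h s *
              ∑ b, qr η γ H pol r P h s b * (Uf η γ H pol r P Qt BA h s b)^2)
            ≤ (∑ s, margS rho0 pol (qr η γ H pol r P) P h s *
              ∑ b, qr η γ H pol r P h s b *
                ((1+t) * (bres η γ H pol r P Qt h s b)^2 + (1+t⁻¹) * (κ^2 * (PY s b)^2))) :=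
          Finset.sum_le_sum fun s _ => mul_le_mul_of_nonneg_left (e1 s) (hmu0 s)
        rw [e2] at step
        have hc1 : (0:ℝ) ≤ 1 + t := by linarith
        have hc2 : (0:ℝ) ≤ (1+t⁻¹) * κ^2 := by
          have : 0 < t⁻¹ := inv_pos.mpr ht
          positivity
        have b1 := mul_le_mul_of_nonneg_left hMh hc1
        have b2 := mul_le_mul_of_nonneg_left hBq hc2
        calc (∑ s, margS rho0 pol (qr η γ H pol r P) P h s *
              ∑ b, qr η γ H pol r P h s b * (Uf η γ H pol r P Qt BA h s b)^2)
            ≤ (1+t) * (∑ s, margS rho0 pol (qr η γ H pol r P) P h s *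
                ∑ b, qr η γ H pol r P h s b * (bres η γ H pol r P Qt h s b)^2)
              + (1+t⁻¹) * κ^2 * (∑ s, margS rho0 pol (qr η γ H pol r P) P h s *
                ∑ b, qr η γ H pol r P h s b * (PY s b)^2) := step
          _ ≤ (1+t) * M + (1+t⁻¹) * κ^2 * ((effH n κ)^2 * M) := by linarith
          _ = (1+t) * M + (1+t⁻¹) * (κ^2 * ((effH n κ)^2 * M)) := by ring
      refine le_trans main ?_
      rw [effH_succ' κ n]
      have hexp : (1+t⁻¹) * (κ^2 * ((effH n κ)^2 * M)) = (t^2 + t) * M := by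
        have ht' : t ≠ 0 := ne_of_gt ht
        have : κ^2 * (effH n κ)^2 = t^2 := by rw [htdef]; ring
        rw [mul_comm (κ^2) ((effH n κ)^2 * M), mul_assoc]
        field_simp
        ring
      rw [hexp]
      have : (1 + κ * effH n κ)^2 * M = (1 + t)^2 * M := by rw [htdef]
      rw [this]
      nlinarith [hM0]

end Struct6

end QSEAux
namespace QSEAux

open QSE

set_option linter.unusedSectionVars false
set_option maxHeartbeats 2000000

section Struct7

variable {S A B : Type} [Fintype S] [Fintype A] [Fintype B]
variable [Nonempty S] [Nonempty A] [Nonempty B]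
variable (η γ : ℝ) (H : ℕ) (pol : ℕ → S → B → A → ℝ) (r : ℕ → S → A → B → ℝ)
variable (P : ℕ → S → A → B → S → ℝ) (Qt : ℕ → S → B → ℝ)

/-- Per-step bound on the expected squared advantage gap. -/
lemma ED2_le (hη : 0 < η) (hγ0 : 0 ≤ γ) (BA : ℝ) (hBA : 0 < BA)
    (rho0 : S → ℝ) (hrho0 : ∀ s, 0 ≤ rho0 s)
    (hA : ∀ h < H, ∀ s b, |softA η γ H pol r P h s b| ≤ BA)
    (hAt : ∀ h < H, ∀ s b, |aTil η H Qt h s b| ≤ BA)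
    (hpol0 : ∀ h < H, ∀ s b a, 0 ≤ pol h s b a)
    (hpol1 : ∀ h < H, ∀ s b, ∑ a, pol h s b a = 1)
    (hP0 : ∀ h < H, ∀ s a b s', 0 ≤ P h s a b s')
    (hP1 : ∀ h < H, ∀ s a b, ∑ s', P h s a b s' = 1)
    (M : ℝ) (hM0 : 0 ≤ M)
    (hM : ∀ l, l < H → (∑ s, margS rho0 pol (qr η γ H pol r P) P l s *
        ∑ b, qr η γ H pol r P l s b * (bres η γ H pol r P Qt l s b)^2) ≤ M)
    {l : ℕ} (hl : l < H) :
    (∑ s, margS rho0 pol (qr η γ H pol r P) P l s *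
        ∑ b, qr η γ H pol r P l s b * (Dv η γ H pol r P Qt l s b)^2)
      ≤ 4 * Real.exp (4*η*BA) * (effH H (Real.exp (2*η*BA) * γ))^2 * M := by
  set c : ℝ := Real.exp (2*η*BA) with hc
  have hc1 : (1:ℝ) ≤ c := by
    rw [hc, show (1:ℝ) = Real.exp 0 by simp]
    apply Real.exp_le_exp.mpr
    positivity
  have hc0 : 0 ≤ c := by linarith
  have hU0 : ∀ (s : S) (b : B), 0 ≤ Uf η γ H pol r P Qt BA l s b :=
    fun s b => Uf_nonneg' η γ H pol r P Qt hγ0 BA hpol0 hP0 (le_of_lt hl) s b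
  have hmu0 : ∀ s : S, 0 ≤ margS rho0 pol (qr η γ H pol r P) P l s :=
    margS_nonneg η γ H pol r P rho0 hrho0 hpol0 hP0 l (le_of_lt hl)
  -- pointwise : Dv² ≤ 2 U² + 2 c² (Σ qr U)²
  have hpt : ∀ (s : S) (b : B), (Dv η γ H pol r P Qt l s b)^2
      ≤ 2 * (Uf η γ H pol r P Qt BA l s b)^2
        + 2 * c^2 * (∑ b', qr η γ H pol r P l s b' * Uf η γ H pol r P Qt BA l s b')^2 := by
    intro s b
    have habs := absDv_le_U η γ H pol r P Qt hη hγ0 BA hBA hA hAt hpol0 hP0 hl s b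
    have hR0 : 0 ≤ ∑ b', qr η γ H pol r P l s b' * Uf η γ H pol r P Qt BA l s b' :=
      Finset.sum_nonneg fun b' _ => mul_nonneg (qr_pos η γ H pol r P _ s b').le (hU0 s b')
    have hrhs0 : 0 ≤ Uf η γ H pol r P Qt BA l s b
        + c * ∑ b', qr η γ H pol r P l s b' * Uf η γ H pol r P Qt BA l s b' := by
      have := mul_nonneg hc0 hR0
      linarith [hU0 s b]
    have hsq : (Dv η γ H pol r P Qt l s b)^2 ≤ (Uf η γ H pol r P Qt BA l s b
        + c * ∑ b', qr η γ H pol r P l s b' * Uf η γ H pol r P Qt BA l s b')^2 := by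
      apply sq_le_sq'
      · linarith [neg_abs_le (Dv η γ H pol r P Qt l s b)]
      · linarith [le_abs_self (Dv η γ H pol r P Qt l s b)]
    nlinarith [sq_nonneg (Uf η γ H pol r P Qt BA l s b
      - c * ∑ b', qr η γ H pol r P l s b' * Uf η γ H pol r P Qt BA l s b')]
  -- per-state : Σ_b qr Dv² ≤ (2 + 2c²) Σ_b qr U²
  have hst : ∀ s : S, (∑ b, qr η γ H pol r P l s b * (Dv η γ H pol r P Qt l s b)^2)
      ≤ (2 + 2*c^2) * ∑ b, qr η γ H pol r P l s b * (Uf η γ H pol r P Qt BA l s b)^2 := by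
    intro s
    have hJ : (∑ b', qr η γ H pol r P l s b' * Uf η γ H pol r P Qt BA l s b')^2
        ≤ ∑ b', qr η γ H pol r P l s b' * (Uf η γ H pol r P Qt BA l s b')^2 := by
      apply sq_sum_le
      · exact fun b' => (qr_pos η γ H pol r P _ s b').le
      · exact sum_qr_one η γ H pol r P hη hl s
    have step1 : (∑ b, qr η γ H pol r P l s b * (Dv η γ H pol r P Qt l s b)^2)
        ≤ ∑ b, qr η γ H pol r P l s b *
            (2 * (Uf η γ H pol r P Qt BA l s b)^2 + 2 * c^2 *
              (∑ b', qr η γ H pol r P l s b' * Uf η γ H pol r P Qt BA l s b')^2) :=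
      Finset.sum_le_sum fun b _ =>
        mul_le_mul_of_nonneg_left (hpt s b) (qr_pos η γ H pol r P _ s b).le
    refine le_trans step1 ?_
    have e : ∀ b : B, qr η γ H pol r P l s b *
            (2 * (Uf η γ H pol r P Qt BA l s b)^2 + 2 * c^2 *
              (∑ b', qr η γ H pol r P l s b' * Uf η γ H pol r P Qt BA l s b')^2)
        = 2 * (qr η γ H pol r P l s b * (Uf η γ H pol r P Qt BA l s b)^2)
          + (2 * c^2 * (∑ b', qr η γ H pol r P l s b' * Uf η γ H pol r P Qt BA l s b')^2)
            * qr η γ H pol r P l s b := fun b => by ring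
    have expand : ∑ b, qr η γ H pol r P l s b *
            (2 * (Uf η γ H pol r P Qt BA l s b)^2 + 2 * c^2 *
              (∑ b', qr η γ H pol r P l s b' * Uf η γ H pol r P Qt BA l s b')^2)
        = 2 * (∑ b, qr η γ H pol r P l s b * (Uf η γ H pol r P Qt BA l s b)^2)
          + (2 * c^2 * (∑ b', qr η γ H pol r P l s b' * Uf η γ H pol r P Qt BA l s b')^2)
            * (∑ b, qr η γ H pol r P l s b) := by
      rw [Finset.sum_congr rfl fun b _ => e b, Finset.sum_add_distrib, ← Finset.mul_sum,
        ← Finset.mul_sum]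
    rw [expand, sum_qr_one η γ H pol r P hη hl s, mul_one]
    have hsum0 : 0 ≤ ∑ b, qr η γ H pol r P l s b * (Uf η γ H pol r P Qt BA l s b)^2 :=
      Finset.sum_nonneg fun b _ =>
        mul_nonneg (qr_pos η γ H pol r P _ s b).le (sq_nonneg _)
    nlinarith [mul_le_mul_of_nonneg_left hJ (by positivity : (0:ℝ) ≤ 2*c^2)]
  -- integrate over states and use EU2_le
  have hEU := EU2_le η γ H pol r P Qt hη hγ0 BA hBA rho0 hrho0 hpol0 hpol1 hP0 hP1 M hM0 hM
    (H - l) (by omega)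
  rw [show H - (H - l) = l by omega] at hEU
  have hEU2pos : 0 ≤ ∑ s, margS rho0 pol (qr η γ H pol r P) P l s *
      ∑ b, qr η γ H pol r P l s b * (Uf η γ H pol r P Qt BA l s b)^2 :=
    Finset.sum_nonneg fun s _ => mul_nonneg (hmu0 s) (Finset.sum_nonneg fun b _ =>
      mul_nonneg (qr_pos η γ H pol r P _ s b).le (sq_nonneg _))
  have step2 : (∑ s, margS rho0 pol (qr η γ H pol r P) P l s *
        ∑ b, qr η γ H pol r P l s b * (Dv η γ H pol r P Qt l s b)^2)
      ≤ (2 + 2*c^2) * ∑ s, margS rho0 pol (qr η γ H pol r P) P l s *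
          ∑ b, qr η γ H pol r P l s b * (Uf η γ H pol r P Qt BA l s b)^2 := by
    rw [Finset.mul_sum]
    apply Finset.sum_le_sum
    intro s _
    rw [show (2 + 2*c^2) * (margS rho0 pol (qr η γ H pol r P) P l s *
        ∑ b, qr η γ H pol r P l s b * (Uf η γ H pol r P Qt BA l s b)^2)
      = margS rho0 pol (qr η γ H pol r P) P l s * ((2 + 2*c^2) *
        ∑ b, qr η γ H pol r P l s b * (Uf η γ H pol r P Qt BA l s b)^2) by ring]
    exact mul_le_mul_of_nonneg_left (hst s) (hmu0 s)
  refine le_trans step2 ?_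
  have heff : (effH (H - l) (c * γ))^2 ≤ (effH H (c * γ))^2 := by
    have h1 := effH_nonneg (mul_nonneg hc0 hγ0) (H - l)
    have h2 := effH_mono (mul_nonneg hc0 hγ0) (show H - l ≤ H by omega)
    nlinarith
  have hcsq : c^2 = Real.exp (4*η*BA) := by
    rw [hc, sq, ← Real.exp_add, show 2*η*BA + 2*η*BA = 4*η*BA by ring]
  calc (2 + 2*c^2) * ∑ s, margS rho0 pol (qr η γ H pol r P) P l s *
          ∑ b, qr η γ H pol r P l s b * (Uf η γ H pol r P Qt BA l s b)^2
      ≤ (2 + 2*c^2) * ((effH (H-l) (c * γ))^2 * M) := by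
        apply mul_le_mul_of_nonneg_left hEU (by positivity)
    _ ≤ (4 * c^2) * ((effH H (c * γ))^2 * M) := by
        have hb : (effH (H-l) (c*γ))^2 * M ≤ (effH H (c*γ))^2 * M :=
          mul_le_mul_of_nonneg_right heff hM0
        have h0 : 0 ≤ (effH (H-l) (c*γ))^2 * M := mul_nonneg (sq_nonneg _) hM0
        have k1 : (2 + 2*c^2) ≤ 4*c^2 := by nlinarith
        calc (2 + 2*c^2) * ((effH (H-l) (c * γ))^2 * M)
            ≤ (4*c^2) * ((effH (H-l) (c * γ))^2 * M) :=
              mul_le_mul_of_nonneg_right k1 h0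
          _ ≤ (4*c^2) * ((effH H (c * γ))^2 * M) := by
              apply mul_le_mul_of_nonneg_left hb (by positivity)
    _ = 4 * Real.exp (4*η*BA) * (effH H (c * γ))^2 * M := by rw [hcsq]; ring

/-- Unrolled form of `E[W_h]`. -/
lemma mW_eq (hη : 0 < η) (hγ0 : 0 ≤ γ)
    (rho0 : S → ℝ)
    (hpol0 : ∀ h < H, ∀ s b a, 0 ≤ pol h s b a)
    (hP0 : ∀ h < H, ∀ s a b s', 0 ≤ P h s a b s') :
    ∀ n, n ≤ H → (∑ s, margS rho0 pol (qr η γ H pol r P) P (H-n) s *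
        Wf η γ H pol r P Qt (H-n) s)
      = ∑ l ∈ Finset.Ico (H-n) H, γ^(l-(H-n)) *
          (∑ s, margS rho0 pol (qr η γ H pol r P) P l s *
            (-∑ b, qr η γ H pol r P l s b * Dv η γ H pol r P Qt l s b)) := by
  intro n
  induction n with
  | zero =>
    rw [Nat.sub_zero, Finset.Ico_self, Finset.sum_empty]
    intro _
    apply Finset.sum_eq_zero
    intro s _
    rw [Wf_top, mul_zero]
  | succ n ih =>
    intro hn
    have hh : H - (n+1) < H := by omega
    have hs : H - (n+1) + 1 = H - n := by omega
    have stepA : (∑ s, margS rho0 pol (qr η γ H pol r P) P (H-(n+1)) s *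
          Wf η γ H pol r P Qt (H-(n+1)) s)
        = (∑ s, margS rho0 pol (qr η γ H pol r P) P (H-(n+1)) s *
            (-∑ b, qr η γ H pol r P (H-(n+1)) s b * Dv η γ H pol r P Qt (H-(n+1)) s b))
          + γ * ∑ s', margS rho0 pol (qr η γ H pol r P) P (H-(n+1)+1) s' *
              Wf η γ H pol r P Qt (H-(n+1)+1) s' := by
      have e : ∀ s : S, margS rho0 pol (qr η γ H pol r P) P (H-(n+1)) s *
          Wf η γ H pol r P Qt (H-(n+1)) s
          = margS rho0 pol (qr η γ H pol r P) P (H-(n+1)) s *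
              (-∑ b, qr η γ H pol r P (H-(n+1)) s b * Dv η γ H pol r P Qt (H-(n+1)) s b)
            + γ * (margS rho0 pol (qr η γ H pol r P) P (H-(n+1)) s *
              ∑ b, qr η γ H pol r P (H-(n+1)) s b *
                ∑ a, pol (H-(n+1)) s b a * ∑ s', P (H-(n+1)) s a b s' *
                  Wf η γ H pol r P Qt (H-(n+1)+1) s') := by
        intro s
        rw [Wf_succ η γ H pol r P Qt hη hh s]
        rw [show ∑ b, qr η γ H pol r P (H-(n+1)) s b *
            ∑ s', pPol pol P (H-(n+1)) s b s' * Wf η γ H pol r P Qt (H-(n+1)+1) s'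
            = ∑ b, qr η γ H pol r P (H-(n+1)) s b *
                ∑ a, pol (H-(n+1)) s b a * ∑ s', P (H-(n+1)) s a b s' *
                  Wf η γ H pol r P Qt (H-(n+1)+1) s' from
          Finset.sum_congr rfl fun b _ => by rw [polP_swap]]
        ring
      rw [Finset.sum_congr rfl fun s _ => e s, Finset.sum_add_distrib, ← Finset.mul_sum,
        tower η γ H pol r P rho0 (H-(n+1)) (Wf η γ H pol r P Qt (H-(n+1)+1))]
    rw [stepA, hs, ih (by omega)]
    rw [Finset.sum_eq_sum_Ico_succ_bot hh, Nat.sub_self, pow_zero, one_mul]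
    congr 1
    rw [show H - (n+1) + 1 = H - n from hs, Finset.mul_sum]
    apply Finset.sum_congr rfl
    intro l hl
    have hl1 : H - n ≤ l := (Finset.mem_Ico.mp hl).1
    have harith : l - (H-(n+1)) = (l - (H-n)) + 1 := by omega
    rw [harith, pow_succ]
    ring

end Struct7

end QSEAux
namespace QSEAux

open QSE

set_option linter.unusedSectionVars false
set_option maxHeartbeats 2000000

lemma sum_shift_le (H : ℕ) (f : ℕ → ℝ) (hfH : f H = 0) (hf0 : 0 ≤ f 0) :
    ∑ h ∈ Finset.range H, f (h+1) ≤ ∑ h ∈ Finset.range H, f h := by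
  have h1 := Finset.sum_range_succ' f H
  have h2 := Finset.sum_range_succ f H
  rw [h2, hfH] at h1
  linarith

section Struct8

variable {S A B : Type} [Fintype S] [Fintype A] [Fintype B]
variable [Nonempty S] [Nonempty A] [Nonempty B]
variable (η γ : ℝ) (H : ℕ) (pol : ℕ → S → B → A → ℝ) (r : ℕ → S → A → B → ℝ)
variable (P : ℕ → S → A → B → S → ℝ) (Qt : ℕ → S → B → ℝ)

lemma Dv_decomp (hη : 0 < η) {h : ℕ} (hh : h < H) (s : S) (b : B) :
    Dv η γ H pol r P Qt h s b
      = del1 η γ H pol r P Qt h s b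
        + γ * ∑ a, pol h s b a * ∑ s', P h s a b s' * Wf η γ H pol r P Qt (h+1) s'
        - Wf η γ H pol r P Qt h s := by
  have hdel : del1 η γ H pol r P Qt h s b
      = Gf η γ H pol r P Qt h s b - Ff η γ H pol r P Qt h s := rfl
  rw [Dv_eq, EE_eq, hdel, Gf_succ η γ H pol r P Qt hh, polP_swap]
  have e : ∑ s', pPol pol P h s b s' * Wf η γ H pol r P Qt (h+1) s'
      = ∑ s', pPol pol P h s b s' * Zt η γ H pol r P Qt (h+1) s'
        - ∑ s', pPol pol P h s b s' * Ff η γ H pol r P Qt (h+1) s' := by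
    rw [← Finset.sum_sub_distrib]
    exact Finset.sum_congr rfl fun s' _ => by simp only [Wf]; ring
  rw [e]
  simp only [Wf]
  ring

/-- One-step expectation bound. -/
lemma perstep (hη : 0 < η) (hγ0 : 0 ≤ γ) (BA : ℝ) (hBA : 0 < BA)
    (rho0 : S → ℝ) (hrho0 : ∀ s, 0 ≤ rho0 s)
    (hpol0 : ∀ h < H, ∀ s b a, 0 ≤ pol h s b a)
    (hP0 : ∀ h < H, ∀ s a b s', 0 ≤ P h s a b s')
    {h : ℕ} (hh : h < H) :
    (∑ s, margS rho0 pol (qr η γ H pol r P) P h s *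
        ∑ b, |nuTil η H Qt h s b - qr η γ H pol r P h s b|)
      ≤ 2*η * ((∑ s, margS rho0 pol (qr η γ H pol r P) P h s *
            ∑ b, qr η γ H pol r P h s b * |del1 η γ H pol r P Qt h s b|)
          + (γ * (∑ s', margS rho0 pol (qr η γ H pol r P) P (h+1) s' *
              Wf η γ H pol r P Qt (h+1) s')
            + ∑ s, margS rho0 pol (qr η γ H pol r P) P h s *
                Wf η γ H pol r P Qt h s)) := by
  have hmu0 : ∀ s : S, 0 ≤ margS rho0 pol (qr η γ H pol r P) P h s :=
    margS_nonneg η γ H pol r P rho0 hrho0 hpol0 hP0 h (le_of_lt hh)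
  have hW' : ∀ s' : S, 0 ≤ Wf η γ H pol r P Qt (h+1) s' :=
    fun s' => Wf_nonneg' η γ H pol r P Qt hη hγ0 hpol0 hP0 (by omega) s'
  have hWh : ∀ s : S, 0 ≤ Wf η γ H pol r P Qt h s :=
    fun s => Wf_nonneg' η γ H pol r P Qt hη hγ0 hpol0 hP0 (le_of_lt hh) s
  have hX0 : ∀ (s : S) (b : B), 0 ≤ ∑ a, pol h s b a *
      ∑ s', P h s a b s' * Wf η γ H pol r P Qt (h+1) s' := by
    intro s b
    apply Finset.sum_nonneg; intro a _
    apply mul_nonneg (hpol0 h hh s b a)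
    apply Finset.sum_nonneg; intro s' _
    exact mul_nonneg (hP0 h hh s a b s') (hW' s')
  -- pointwise bound on |Dv|
  have hpt : ∀ (s : S) (b : B), |Dv η γ H pol r P Qt h s b|
      ≤ |del1 η γ H pol r P Qt h s b|
        + (γ * (∑ a, pol h s b a * ∑ s', P h s a b s' * Wf η γ H pol r P Qt (h+1) s')
          + Wf η γ H pol r P Qt h s) := by
    intro s b
    rw [Dv_decomp η γ H pol r P Qt hη hh s b]
    have h1 := abs_add_le (del1 η γ H pol r P Qt h s b)
      (γ * (∑ a, pol h s b a * ∑ s', P h s a b s' * Wf η γ H pol r P Qt (h+1) s')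
        - Wf η γ H pol r P Qt h s)
    have h2 : |γ * (∑ a, pol h s b a * ∑ s', P h s a b s' * Wf η γ H pol r P Qt (h+1) s')
        - Wf η γ H pol r P Qt h s|
        ≤ γ * (∑ a, pol h s b a * ∑ s', P h s a b s' * Wf η γ H pol r P Qt (h+1) s')
          + Wf η γ H pol r P Qt h s := by
      have := abs_sub (γ * (∑ a, pol h s b a *
        ∑ s', P h s a b s' * Wf η γ H pol r P Qt (h+1) s')) (Wf η γ H pol r P Qt h s)
      rw [abs_of_nonneg (mul_nonneg hγ0 (hX0 s b)), abs_of_nonneg (hWh s)] at this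
      exact this
    have e : del1 η γ H pol r P Qt h s b
        + γ * (∑ a, pol h s b a * ∑ s', P h s a b s' * Wf η γ H pol r P Qt (h+1) s')
        - Wf η γ H pol r P Qt h s
        = del1 η γ H pol r P Qt h s b
        + (γ * (∑ a, pol h s b a * ∑ s', P h s a b s' * Wf η γ H pol r P Qt (h+1) s')
          - Wf η γ H pol r P Qt h s) := by ring
    rw [e]
    refine le_trans h1 ?_
    linarith
  -- per-state bound
  have hst : ∀ s : S, (∑ b, qr η γ H pol r P h s b * |Dv η γ H pol r P Qt h s b|)
      ≤ (∑ b, qr η γ H pol r P h s b * |del1 η γ H pol r P Qt h s b|)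
        + (γ * ∑ b, qr η γ H pol r P h s b *
            (∑ a, pol h s b a * ∑ s', P h s a b s' * Wf η γ H pol r P Qt (h+1) s')
          + Wf η γ H pol r P Qt h s) := by
    intro s
    have step : (∑ b, qr η γ H pol r P h s b * |Dv η γ H pol r P Qt h s b|)
        ≤ ∑ b, qr η γ H pol r P h s b *
            (|del1 η γ H pol r P Qt h s b|
              + (γ * (∑ a, pol h s b a * ∑ s', P h s a b s' * Wf η γ H pol r P Qt (h+1) s')
                + Wf η γ H pol r P Qt h s)) :=
      Finset.sum_le_sum fun b _ =>
        mul_le_mul_of_nonneg_left (hpt s b) (qr_pos η γ H pol r P h s b).le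
    refine le_trans step ?_
    have e : ∀ b : B, qr η γ H pol r P h s b *
          (|del1 η γ H pol r P Qt h s b|
            + (γ * (∑ a, pol h s b a * ∑ s', P h s a b s' * Wf η γ H pol r P Qt (h+1) s')
              + Wf η γ H pol r P Qt h s))
        = qr η γ H pol r P h s b * |del1 η γ H pol r P Qt h s b|
          + γ * (qr η γ H pol r P h s b *
              (∑ a, pol h s b a * ∑ s', P h s a b s' * Wf η γ H pol r P Qt (h+1) s'))
          + Wf η γ H pol r P Qt h s * qr η γ H pol r P h s b := fun b => by ring
    rw [Finset.sum_congr rfl fun b _ => e b, Finset.sum_add_distrib, Finset.sum_add_distrib,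
      ← Finset.mul_sum, ← Finset.mul_sum, sum_qr_one η γ H pol r P hη hh s, mul_one]
    exact le_of_eq (by ring)
  -- integrate over states
  have step1 : (∑ s, margS rho0 pol (qr η γ H pol r P) P h s *
        ∑ b, |nuTil η H Qt h s b - qr η γ H pol r P h s b|)
      ≤ ∑ s, margS rho0 pol (qr η γ H pol r P) P h s *
          (2 * η * ∑ b, qr η γ H pol r P h s b * |Dv η γ H pol r P Qt h s b|) :=
    Finset.sum_le_sum fun s _ =>
      mul_le_mul_of_nonneg_left (onestep η γ H pol r P Qt hη hh s) (hmu0 s)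
  refine le_trans step1 ?_
  have step2 : (∑ s, margS rho0 pol (qr η γ H pol r P) P h s *
        (2 * η * ∑ b, qr η γ H pol r P h s b * |Dv η γ H pol r P Qt h s b|))
      ≤ ∑ s, margS rho0 pol (qr η γ H pol r P) P h s *
          (2 * η * ((∑ b, qr η γ H pol r P h s b * |del1 η γ H pol r P Qt h s b|)
            + (γ * ∑ b, qr η γ H pol r P h s b *
                (∑ a, pol h s b a * ∑ s', P h s a b s' * Wf η γ H pol r P Qt (h+1) s')
              + Wf η γ H pol r P Qt h s))) := by
    apply Finset.sum_le_sum
    intro s _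
    apply mul_le_mul_of_nonneg_left _ (hmu0 s)
    apply mul_le_mul_of_nonneg_left (hst s) (by positivity)
  refine le_trans step2 ?_
  -- split the sum and apply the tower identity
  have e2 : ∀ s : S, margS rho0 pol (qr η γ H pol r P) P h s *
        (2 * η * ((∑ b, qr η γ H pol r P h s b * |del1 η γ H pol r P Qt h s b|)
          + (γ * ∑ b, qr η γ H pol r P h s b *
              (∑ a, pol h s b a * ∑ s', P h s a b s' * Wf η γ H pol r P Qt (h+1) s')
            + Wf η γ H pol r P Qt h s)))
      = 2*η * (margS rho0 pol (qr η γ H pol r P) P h s *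
            ∑ b, qr η γ H pol r P h s b * |del1 η γ H pol r P Qt h s b|)
        + 2*η*γ * (margS rho0 pol (qr η γ H pol r P) P h s *
            ∑ b, qr η γ H pol r P h s b *
              ∑ a, pol h s b a * ∑ s', P h s a b s' * Wf η γ H pol r P Qt (h+1) s')
        + 2*η * (margS rho0 pol (qr η γ H pol r P) P h s * Wf η γ H pol r P Qt h s) := by
    intro s
    ring
  rw [Finset.sum_congr rfl fun s _ => e2 s, Finset.sum_add_distrib, Finset.sum_add_distrib,
    ← Finset.mul_sum, ← Finset.mul_sum, ← Finset.mul_sum,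
    ← tower η γ H pol r P rho0 h (Wf η γ H pol r P Qt (h+1))]
  ring_nf
  exact le_refl _

/-- Sum of expected `W` over steps, bounded via the unrolled representation. -/
lemma sum_mW_le (hη : 0 < η) (hγ0 : 0 ≤ γ)
    (rho0 : S → ℝ) (hrho0 : ∀ s, 0 ≤ rho0 s)
    (hpol0 : ∀ h < H, ∀ s b a, 0 ≤ pol h s b a)
    (hP0 : ∀ h < H, ∀ s a b s', 0 ≤ P h s a b s') :
    ∑ h ∈ Finset.range H, (∑ s, margS rho0 pol (qr η γ H pol r P) P h s *
        Wf η γ H pol r P Qt h s)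
      ≤ effH H γ * ∑ l ∈ Finset.range H,
          (∑ s, margS rho0 pol (qr η γ H pol r P) P l s *
            (-∑ b, qr η γ H pol r P l s b * Dv η γ H pol r P Qt l s b)) := by
  have hmb0 : ∀ l ∈ Finset.range H, 0 ≤ ∑ s, margS rho0 pol (qr η γ H pol r P) P l s *
      (-∑ b, qr η γ H pol r P l s b * Dv η γ H pol r P Qt l s b) := by
    intro l hl
    have hlH : l < H := Finset.mem_range.mp hl
    apply Finset.sum_nonneg
    intro s _
    apply mul_nonneg (margS_nonneg η γ H pol r P rho0 hrho0 hpol0 hP0 l (le_of_lt hlH) s)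
    linarith [sum_qr_Dv_nonpos η γ H pol r P Qt hη hlH s]
  have heq : ∀ h ∈ Finset.range H,
      (∑ s, margS rho0 pol (qr η γ H pol r P) P h s * Wf η γ H pol r P Qt h s)
      = ∑ l ∈ Finset.Ico h H, γ^(l-h) *
          (∑ s, margS rho0 pol (qr η γ H pol r P) P l s *
            (-∑ b, qr η γ H pol r P l s b * Dv η γ H pol r P Qt l s b)) := by
    intro h hhm
    have hh : h < H := Finset.mem_range.mp hhm
    have := mW_eq η γ H pol r P Qt hη hγ0 rho0 hpol0 hP0 (H-h) (by omega)
    rwa [show H - (H-h) = h by omega] at this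
  rw [Finset.sum_congr rfl heq, Finset.range_eq_Ico, Finset.sum_Ico_Ico_comm]
  have hend : ∀ l ∈ Finset.Ico 0 H,
      (∑ h ∈ Finset.Ico 0 (l+1), γ^(l-h) *
        (∑ s, margS rho0 pol (qr η γ H pol r P) P l s *
          (-∑ b, qr η γ H pol r P l s b * Dv η γ H pol r P Qt l s b)))
      ≤ effH H γ * (∑ s, margS rho0 pol (qr η γ H pol r P) P l s *
          (-∑ b, qr η γ H pol r P l s b * Dv η γ H pol r P Qt l s b)) := by
    intro l hl
    have hlH : l < H := (Finset.mem_Ico.mp hl).2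
    rw [← Finset.sum_mul]
    apply mul_le_mul_of_nonneg_right _ (hmb0 l (Finset.mem_range.mpr hlH))
    have e1 : ∑ h ∈ Finset.Ico 0 (l+1), γ^(l-h) = ∑ h ∈ Finset.range (l+1), γ^(l-h) := by
      rw [Finset.range_eq_Ico]
    have e2 : ∑ h ∈ Finset.range (l+1), γ^(l-h) = ∑ i ∈ Finset.range (l+1), γ^i := by
      have := Finset.sum_range_reflect (fun i => γ^i) (l+1)
      rw [← this]
      exact Finset.sum_congr rfl fun i hi => by
        rw [show l + 1 - 1 - i = l - i by omega]
    rw [e1, e2]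
    exact effH_mono hγ0 (by omega)
  calc ∑ l ∈ Finset.Ico 0 H, ∑ h ∈ Finset.Ico 0 (l+1), γ^(l-h) *
        (∑ s, margS rho0 pol (qr η γ H pol r P) P l s *
          (-∑ b, qr η γ H pol r P l s b * Dv η γ H pol r P Qt l s b))
      ≤ ∑ l ∈ Finset.Ico 0 H, effH H γ *
        (∑ s, margS rho0 pol (qr η γ H pol r P) P l s *
          (-∑ b, qr η γ H pol r P l s b * Dv η γ H pol r P Qt l s b)) :=
        Finset.sum_le_sum hend
    _ = _ := by
        rw [← Finset.range_eq_Ico, Finset.mul_sum]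

end Struct8

end QSEAux

open QSEAux

set_option maxHeartbeats 2000000

/-- Response model error, farsighted-form bound (steps 0-based: `h < H` corresponds to
`h+1 ∈ [H]` of the paper).  With `ν = ν^π` the quantal response of `π` and `ν̃` the
quantal response derived from the estimates `Q̃`:
`Σ_h H·E^{π,ν}[‖(ν̃_h − ν_h)(·|s_h)‖₁] ≤ C⁽⁰⁾ Σ_h E^{π,ν}[|Δ̃_h⁽¹⁾(s_h,b_h)|]
+ C⁽²⁾ max_h E^{π,ν}[((Q̃_h − r_h^π − γ P_h^π Ṽ_{h+1})(s_h,b_h))²]`,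
where `C⁽⁰⁾ = 2ηH` and
`C⁽²⁾ = 2η²H² exp(6ηB_A)(1 + 4 eff_H(γ))(eff_H(exp(2ηB_A)γ))²`. -/
theorem response_model_error_farsighted_form
    {S A B : Type} [Fintype S] [Fintype A] [Fintype B]
    [Nonempty S] [Nonempty A] [Nonempty B]
    (H : ℕ) (hH : 1 ≤ H) (η γ : ℝ) (hη : 0 < η) (hγ0 : 0 ≤ γ) (hγ1 : γ ≤ 1)
    (rho0 : S → ℝ) (hrho0 : ∀ s, 0 ≤ rho0 s) (hrho1 : ∑ s, rho0 s = 1)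
    (P : ℕ → S → A → B → S → ℝ)
    (hP0 : ∀ h < H, ∀ s a b s', 0 ≤ P h s a b s')
    (hP1 : ∀ h < H, ∀ s a b, ∑ s', P h s a b s' = 1)
    (r : ℕ → S → A → B → ℝ) (hr : ∀ h < H, ∀ s a b, r h s a b ∈ Set.Icc (0 : ℝ) 1)
    (pol : ℕ → S → B → A → ℝ)
    (hpol0 : ∀ h < H, ∀ s b a, 0 ≤ pol h s b a)
    (hpol1 : ∀ h < H, ∀ s b, ∑ a, pol h s b a = 1)
    (Qt : ℕ → S → B → ℝ)
    (BA : ℝ) (hBA : 0 < BA)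
    (hA : ∀ h < H, ∀ s b, |softA η γ H pol r P h s b| ≤ BA)
    (hAt : ∀ h < H, ∀ s b, |aTil η H Qt h s b| ≤ BA) :
    ∑ h ∈ Finset.range H, (H : ℝ) * ∑ s,
        margS rho0 pol (qr η γ H pol r P) P h s *
          ∑ b, |nuTil η H Qt h s b - qr η γ H pol r P h s b| ≤
      (2 * η * (H : ℝ)) *
        ∑ h ∈ Finset.range H, ∑ s, ∑ b,
          margS rho0 pol (qr η γ H pol r P) P h s * qr η γ H pol r P h s b *
            |del1 η γ H pol r P Qt h s b| +
      (2 * η ^ 2 * (H : ℝ) ^ 2 * Real.exp (6 * η * BA) * (1 + 4 * effH H γ) *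
          (effH H (Real.exp (2 * η * BA) * γ)) ^ 2) *
        (Finset.range H).sup' (Finset.nonempty_range_iff.mpr (Nat.one_le_iff_ne_zero.mp hH))
          (fun h => ∑ s, ∑ b,
            margS rho0 pol (qr η γ H pol r P) P h s * qr η γ H pol r P h s b *
              (bres η γ H pol r P Qt h s b) ^ 2) := by
  have hH0 : (0:ℝ) ≤ (H:ℝ) := Nat.cast_nonneg H
  have shape : ∀ (x : ℕ → S → B → ℝ) (l : ℕ),
      (∑ s, ∑ b, margS rho0 pol (qr η γ H pol r P) P l s * qr η γ H pol r P l s b * x l s b)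
      = ∑ s, margS rho0 pol (qr η γ H pol r P) P l s *
          ∑ b, qr η γ H pol r P l s b * x l s b := by
    intro x l
    refine Finset.sum_congr rfl fun s _ => ?_
    rw [Finset.mul_sum]
    exact Finset.sum_congr rfl fun b _ => by ring
  set MM : ℝ := (Finset.range H).sup'
      (Finset.nonempty_range_iff.mpr (Nat.one_le_iff_ne_zero.mp hH))
      (fun h => ∑ s, ∑ b,
        margS rho0 pol (qr η γ H pol r P) P h s * qr η γ H pol r P h s b *
          (bres η γ H pol r P Qt h s b) ^ 2) with hMM
  have hM : ∀ l, l < H → (∑ s, margS rho0 pol (qr η γ H pol r P) P l s *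
      ∑ b, qr η γ H pol r P l s b * (bres η γ H pol r P Qt l s b)^2) ≤ MM := by
    intro l hl
    rw [← shape (fun l s b => (bres η γ H pol r P Qt l s b)^2) l]
    exact Finset.le_sup' (fun h => ∑ s, ∑ b,
      margS rho0 pol (qr η γ H pol r P) P h s * qr η γ H pol r P h s b *
        (bres η γ H pol r P Qt h s b) ^ 2) (Finset.mem_range.mpr hl)
  have hM0 : 0 ≤ MM := by
    refine le_trans ?_ (hM 0 (by omega))
    apply Finset.sum_nonneg; intro s _
    apply mul_nonneg (margS_nonneg η γ H pol r P rho0 hrho0 hpol0 hP0 0 (by omega) s)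
    apply Finset.sum_nonneg; intro b _
    exact mul_nonneg (qr_pos η γ H pol r P 0 s b).le (sq_nonneg _)
  -- nonnegativity of the expected W's
  have hmW0 : ∀ l, l ≤ H → 0 ≤ ∑ s, margS rho0 pol (qr η γ H pol r P) P l s *
      Wf η γ H pol r P Qt l s := by
    intro l hl
    apply Finset.sum_nonneg; intro s _
    exact mul_nonneg (margS_nonneg η γ H pol r P rho0 hrho0 hpol0 hP0 l hl s)
      (Wf_nonneg' η γ H pol r P Qt hη hγ0 hpol0 hP0 hl s)
  have hmWH : (∑ s, margS rho0 pol (qr η γ H pol r P) P H s * Wf η γ H pol r P Qt H s)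
      = 0 := by
    apply Finset.sum_eq_zero; intro s _
    rw [Wf_top, mul_zero]
  -- step 1 : per-step bound summed over h
  have main : (∑ h ∈ Finset.range H, (H : ℝ) * ∑ s,
        margS rho0 pol (qr η γ H pol r P) P h s *
          ∑ b, |nuTil η H Qt h s b - qr η γ H pol r P h s b|)
      ≤ ∑ h ∈ Finset.range H, ((H:ℝ) * (2*η *
          ((∑ s, margS rho0 pol (qr η γ H pol r P) P h s *
            ∑ b, qr η γ H pol r P h s b * |del1 η γ H pol r P Qt h s b|)
          + (γ * (∑ s', margS rho0 pol (qr η γ H pol r P) P (h+1) s' *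
              Wf η γ H pol r P Qt (h+1) s')
            + ∑ s, margS rho0 pol (qr η γ H pol r P) P h s *
                Wf η γ H pol r P Qt h s)))) := by
    apply Finset.sum_le_sum
    intro h hhm
    exact mul_le_mul_of_nonneg_left
      (perstep η γ H pol r P Qt hη hγ0 BA hBA rho0 hrho0 hpol0 hP0
        (Finset.mem_range.mp hhm)) hH0
  refine le_trans main ?_
  -- step 2 : split the sum
  have split : (∑ h ∈ Finset.range H, ((H:ℝ) * (2*η *
        ((∑ s, margS rho0 pol (qr η γ H pol r P) P h s *
          ∑ b, qr η γ H pol r P h s b * |del1 η γ H pol r P Qt h s b|)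
        + (γ * (∑ s', margS rho0 pol (qr η γ H pol r P) P (h+1) s' *
            Wf η γ H pol r P Qt (h+1) s')
          + ∑ s, margS rho0 pol (qr η γ H pol r P) P h s *
              Wf η γ H pol r P Qt h s)))))
      = (2*η*(H:ℝ)) * (∑ h ∈ Finset.range H,
          ∑ s, margS rho0 pol (qr η γ H pol r P) P h s *
            ∑ b, qr η γ H pol r P h s b * |del1 η γ H pol r P Qt h s b|)
        + ((2*η*(H:ℝ)*γ) * (∑ h ∈ Finset.range H,
            ∑ s', margS rho0 pol (qr η γ H pol r P) P (h+1) s' *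
              Wf η γ H pol r P Qt (h+1) s')
          + (2*η*(H:ℝ)) * (∑ h ∈ Finset.range H,
              ∑ s, margS rho0 pol (qr η γ H pol r P) P h s *
                Wf η γ H pol r P Qt h s)) := by
    rw [Finset.mul_sum, Finset.mul_sum, Finset.mul_sum, ← Finset.sum_add_distrib,
      ← Finset.sum_add_distrib]
    exact Finset.sum_congr rfl fun h _ => by ring
  rw [split]
  -- step 3 : bound the W part
  have hshift : (∑ h ∈ Finset.range H,
        ∑ s', margS rho0 pol (qr η γ H pol r P) P (h+1) s' *
          Wf η γ H pol r P Qt (h+1) s')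
      ≤ ∑ h ∈ Finset.range H,
          ∑ s, margS rho0 pol (qr η γ H pol r P) P h s * Wf η γ H pol r P Qt h s :=
    sum_shift_le H (fun l => ∑ s, margS rho0 pol (qr η γ H pol r P) P l s *
      Wf η γ H pol r P Qt l s) hmWH (hmW0 0 (by omega))
  have hSW : (∑ h ∈ Finset.range H,
        ∑ s, margS rho0 pol (qr η γ H pol r P) P h s * Wf η γ H pol r P Qt h s)
      ≤ effH H γ * ∑ l ∈ Finset.range H,
          (∑ s, margS rho0 pol (qr η γ H pol r P) P l s *
            (-∑ b, qr η γ H pol r P l s b * Dv η γ H pol r P Qt l s b)) :=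
    sum_mW_le η γ H pol r P Qt hη hγ0 rho0 hrho0 hpol0 hP0
  -- step 4 : bound Σ mβ by the quadratic quantity
  have hSmb : (∑ l ∈ Finset.range H,
        (∑ s, margS rho0 pol (qr η γ H pol r P) P l s *
          (-∑ b, qr η γ H pol r P l s b * Dv η γ H pol r P Qt l s b)))
      ≤ (η/2) * Real.exp (2*η*BA) * ∑ l ∈ Finset.range H,
          (∑ s, margS rho0 pol (qr η γ H pol r P) P l s *
            ∑ b, qr η γ H pol r P l s b * (Dv η γ H pol r P Qt l s b)^2) := by
    rw [Finset.mul_sum]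
    apply Finset.sum_le_sum
    intro l hl
    have hlH : l < H := Finset.mem_range.mp hl
    have step : (∑ s, margS rho0 pol (qr η γ H pol r P) P l s *
          (-∑ b, qr η γ H pol r P l s b * Dv η γ H pol r P Qt l s b))
        ≤ ∑ s, margS rho0 pol (qr η γ H pol r P) P l s *
            ((η/2) * Real.exp (2*η*BA) *
              ∑ b, qr η γ H pol r P l s b * (Dv η γ H pol r P Qt l s b)^2) := by
      apply Finset.sum_le_sum
      intro s _
      apply mul_le_mul_of_nonneg_left _
        (margS_nonneg η γ H pol r P rho0 hrho0 hpol0 hP0 l (le_of_lt hlH) s)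
      have := beta_le η γ H pol r P Qt hη BA hBA hA hAt hlH s
      linarith
    refine le_trans step ?_
    rw [Finset.mul_sum]
    exact le_of_eq (Finset.sum_congr rfl fun s _ => by ring)
  -- step 5 : bound Σ q_l by H times the sup
  have hSq : (∑ l ∈ Finset.range H,
        (∑ s, margS rho0 pol (qr η γ H pol r P) P l s *
          ∑ b, qr η γ H pol r P l s b * (Dv η γ H pol r P Qt l s b)^2))
      ≤ (H:ℝ) * (4 * Real.exp (4*η*BA) * (effH H (Real.exp (2*η*BA) * γ))^2 * MM) := by
    have hcard := Finset.sum_le_card_nsmul (Finset.range H)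
      (fun l => ∑ s, margS rho0 pol (qr η γ H pol r P) P l s *
        ∑ b, qr η γ H pol r P l s b * (Dv η γ H pol r P Qt l s b)^2)
      (4 * Real.exp (4*η*BA) * (effH H (Real.exp (2*η*BA) * γ))^2 * MM)
      (fun l hl => ED2_le η γ H pol r P Qt hη hγ0 BA hBA rho0 hrho0 hA hAt hpol0 hpol1
        hP0 hP1 MM hM0 hM (Finset.mem_range.mp hl))
    rw [Finset.card_range] at hcard
    calc _ ≤ _ := hcard
      _ = (H:ℝ) * (4 * Real.exp (4*η*BA) * (effH H (Real.exp (2*η*BA) * γ))^2 * MM) := by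
          rw [nsmul_eq_mul]
  -- combine the W chain
  have hWtotal : ((2*η*(H:ℝ)*γ) * (∑ h ∈ Finset.range H,
        ∑ s', margS rho0 pol (qr η γ H pol r P) P (h+1) s' *
          Wf η γ H pol r P Qt (h+1) s')
      + (2*η*(H:ℝ)) * (∑ h ∈ Finset.range H,
          ∑ s, margS rho0 pol (qr η γ H pol r P) P h s * Wf η γ H pol r P Qt h s))
      ≤ (2 * η ^ 2 * (H : ℝ) ^ 2 * Real.exp (6 * η * BA) * (1 + 4 * effH H γ) *
          (effH H (Real.exp (2 * η * BA) * γ)) ^ 2) * MM := by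
    have c1 : (0:ℝ) ≤ 2*η*(H:ℝ)*γ := by positivity
    have c2 : (0:ℝ) ≤ 2*η*(H:ℝ) := by positivity
    have b1 := mul_le_mul_of_nonneg_left hshift c1
    -- so total ≤ (2ηH(1+γ)) * SW
    have b2 : ((2*η*(H:ℝ)*γ) * (∑ h ∈ Finset.range H,
          ∑ s', margS rho0 pol (qr η γ H pol r P) P (h+1) s' *
            Wf η γ H pol r P Qt (h+1) s')
        + (2*η*(H:ℝ)) * (∑ h ∈ Finset.range H,
            ∑ s, margS rho0 pol (qr η γ H pol r P) P h s * Wf η γ H pol r P Qt h s))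
        ≤ (2*η*(H:ℝ)*(1+γ)) * (∑ h ∈ Finset.range H,
            ∑ s, margS rho0 pol (qr η γ H pol r P) P h s * Wf η γ H pol r P Qt h s) := by
      nlinarith [hshift, c1, c2]
    refine le_trans b2 ?_
    have c3 : (0:ℝ) ≤ 2*η*(H:ℝ)*(1+γ) := by positivity
    have b3 := mul_le_mul_of_nonneg_left hSW c3
    refine le_trans b3 ?_
    have c4 : (0:ℝ) ≤ (2*η*(H:ℝ)*(1+γ)) * effH H γ :=
      mul_nonneg c3 (effH_nonneg hγ0 H)
    have b4 : (2*η*(H:ℝ)*(1+γ)) * (effH H γ * ∑ l ∈ Finset.range H,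
          (∑ s, margS rho0 pol (qr η γ H pol r P) P l s *
            (-∑ b, qr η γ H pol r P l s b * Dv η γ H pol r P Qt l s b)))
        ≤ (2*η*(H:ℝ)*(1+γ)) * (effH H γ * ((η/2) * Real.exp (2*η*BA) *
            ∑ l ∈ Finset.range H,
              (∑ s, margS rho0 pol (qr η γ H pol r P) P l s *
                ∑ b, qr η γ H pol r P l s b * (Dv η γ H pol r P Qt l s b)^2))) := by
      rw [← mul_assoc, ← mul_assoc]
      exact mul_le_mul_of_nonneg_left hSmb c4
    refine le_trans b4 ?_
    have c5 : (0:ℝ) ≤ (2*η*(H:ℝ)*(1+γ)) * (effH H γ * ((η/2) * Real.exp (2*η*BA))) := by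
      have := effH_nonneg hγ0 H
      positivity
    have b5 : (2*η*(H:ℝ)*(1+γ)) * (effH H γ * ((η/2) * Real.exp (2*η*BA) *
          ∑ l ∈ Finset.range H,
            (∑ s, margS rho0 pol (qr η γ H pol r P) P l s *
              ∑ b, qr η γ H pol r P l s b * (Dv η γ H pol r P Qt l s b)^2)))
        ≤ (2*η*(H:ℝ)*(1+γ)) * (effH H γ * ((η/2) * Real.exp (2*η*BA) *
            ((H:ℝ) * (4 * Real.exp (4*η*BA) * (effH H (Real.exp (2*η*BA) * γ))^2 * MM)))) := by
      have e1 : ∀ X : ℝ, (2*η*(H:ℝ)*(1+γ)) * (effH H γ * ((η/2) * Real.exp (2*η*BA) * X))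
          = ((2*η*(H:ℝ)*(1+γ)) * (effH H γ * ((η/2) * Real.exp (2*η*BA)))) * X :=
        fun X => by ring
      rw [e1, e1]
      exact mul_le_mul_of_nonneg_left hSq c5
    refine le_trans b5 ?_
    -- final numeric comparison
    have he6 : Real.exp (2*η*BA) * Real.exp (4*η*BA) = Real.exp (6*η*BA) := by
      rw [← Real.exp_add]
      norm_num
      ring_nf
    have base : 4*(1+γ)*effH H γ ≤ 2*(1+4*effH H γ) := by
      nlinarith [effH_nonneg hγ0 H]
    have posK : 0 ≤ η^2*(H:ℝ)^2*Real.exp (6*η*BA)*(effH H (Real.exp (2*η*BA) * γ))^2*MM := by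
      have h1 : (0:ℝ) ≤ η^2*(H:ℝ)^2*Real.exp (6*η*BA)*(effH H (Real.exp (2*η*BA) * γ))^2 := by
        positivity
      exact mul_nonneg h1 hM0
    calc (2*η*(H:ℝ)*(1+γ)) * (effH H γ * ((η/2) * Real.exp (2*η*BA) *
          ((H:ℝ) * (4 * Real.exp (4*η*BA) * (effH H (Real.exp (2*η*BA) * γ))^2 * MM))))
        = (4*(1+γ)*effH H γ) * (η^2*(H:ℝ)^2*(Real.exp (2*η*BA) * Real.exp (4*η*BA))*
            (effH H (Real.exp (2*η*BA) * γ))^2*MM) := by ring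
      _ = (4*(1+γ)*effH H γ) * (η^2*(H:ℝ)^2*Real.exp (6*η*BA)*
            (effH H (Real.exp (2*η*BA) * γ))^2*MM) := by rw [he6]
      _ ≤ (2*(1+4*effH H γ)) * (η^2*(H:ℝ)^2*Real.exp (6*η*BA)*
            (effH H (Real.exp (2*η*BA) * γ))^2*MM) :=
          mul_le_mul_of_nonneg_right base posK
      _ = (2 * η ^ 2 * (H : ℝ) ^ 2 * Real.exp (6 * η * BA) * (1 + 4 * effH H γ) *
            (effH H (Real.exp (2 * η * BA) * γ)) ^ 2) * MM := by ring
  -- step 6 : identify the first term with the goal's first term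
  have hT1 : (∑ h ∈ Finset.range H,
        ∑ s, margS rho0 pol (qr η γ H pol r P) P h s *
          ∑ b, qr η γ H pol r P h s b * |del1 η γ H pol r P Qt h s b|)
      = ∑ h ∈ Finset.range H, ∑ s, ∑ b,
          margS rho0 pol (qr η γ H pol r P) P h s * qr η γ H pol r P h s b *
            |del1 η γ H pol r P Qt h s b| :=
    Finset.sum_congr rfl fun h _ =>
      (shape (fun h s b => |del1 η γ H pol r P Qt h s b|) h).symm
  rw [hT1] at *
  have := add_le_add_right hWtotal ((2*η*(H:ℝ)) * ∑ h ∈ Finset.range H, ∑ s, ∑ b,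
    margS rho0 pol (qr η γ H pol r P) P h s * qr η γ H pol r P h s b *
      |del1 η γ H pol r P Qt h s b|)
  calc _ ≤ _ := this
    _ = _ := by ring
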